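/- arXiv:math/0505368 — 6 statements merged into one kernel-verified Lean document; each statement's English description precedes it below -/
import Mathlib

section
/- Let W : [0,∞) → ℝ be continuous, and for z in the upper half plane ℍ let g_t(z) denote the maximal solution of the chordal Loewner equation with lifetime τ_z. For each t ≥ 0 the set H_t = {z ∈ ℍ : τ_z > t} is open, and the map z ↦ g_t(z) is holomorphic and injective on H_t, with g_t(H_t) ⊆ ℍ. -/
open Set Filter Topology
open scoped ENNReal
open intervalIntegral


section Loewner
variable (W : ℝ → ℝ) (g : ℝ → ℂ → ℂ) (τ : ℂ → ℝ≥0∞)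

lemma tau_mono {z : ℂ} {s t : ℝ} (hst : s ≤ t) (h : ENNReal.ofReal t < τ z) :
    ENNReal.ofReal s < τ z :=
  lt_of_le_of_lt (ENNReal.ofReal_le_ofReal hst) h

variable
    (hode : ∀ z : ℂ, 0 < z.im → ∀ t : ℝ, 0 ≤ t → ENNReal.ofReal t < τ z →
      g t z ≠ (W t : ℂ) ∧
        HasDerivWithinAt (fun s => g s z) (2 / (g t z - (W t : ℂ)))
          (Set.Ici (0 : ℝ)) t)

include hode in
lemma flow_cont {z : ℂ} (hz : 0 < z.im) {t : ℝ} (hτ : ENNReal.ofReal t < τ z) :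
    ContinuousOn (fun s => g s z) (Set.Icc 0 t) := by
  intro s hs
  exact ((hode z hz s hs.1 (tau_mono τ hs.2 hτ)).2.continuousWithinAt).mono
    (fun u hu => hu.1)

include hode in
lemma flow_ne {z : ℂ} (hz : 0 < z.im) {t : ℝ} (hτ : ENNReal.ofReal t < τ z)
    {s : ℝ} (hs : s ∈ Set.Icc 0 t) : g s z - (W s : ℂ) ≠ 0 :=
  sub_ne_zero.2 (hode z hz s hs.1 (tau_mono τ hs.2 hτ)).1

end Loewner

section L
variable (W : ℝ → ℝ) (g : ℝ → ℂ → ℂ) (τ : ℂ → ℝ≥0∞)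
    (hW : ContinuousOn W (Set.Ici (0 : ℝ)))
    (hg0 : ∀ z : ℂ, 0 < z.im → g 0 z = z)
    (hode : ∀ z : ℂ, 0 < z.im → ∀ t : ℝ, 0 ≤ t → ENNReal.ofReal t < τ z →
      g t z ≠ (W t : ℂ) ∧
        HasDerivWithinAt (fun s => g s z) (2 / (g t z - (W t : ℂ)))
          (Set.Ici (0 : ℝ)) t)

lemma ode_linear' {f c : ℝ → ℂ} {t : ℝ} (ht : 0 ≤ t)
    (hf : ContinuousOn f (Set.Icc 0 t)) (hc : ContinuousOn c (Set.Icc 0 t))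
    (hder : ∀ s ∈ Set.Ico 0 t, HasDerivWithinAt f (c s * f s) (Set.Ici s) s) :
    f t = f 0 * Complex.exp (∫ s in (0:ℝ)..t, c s) := by
  set c' : ℝ → ℂ := fun u => c (min (max u 0) t) with hc'def
  have hmem : ∀ u : ℝ, min (max u 0) t ∈ Set.Icc 0 t := fun u =>
    ⟨le_min (le_max_right u 0) ht, min_le_right _ _⟩
  have hcc' : Continuous c' := hc.comp_continuous (by continuity) hmem
  have hc'eq : ∀ u ∈ Set.Icc 0 t, c' u = c u := by
    intro u hu
    simp [hc'def, max_eq_left hu.1, min_eq_left hu.2]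
  set A : ℝ → ℂ := fun s => ∫ x in (0:ℝ)..s, c' x with hAdef
  have hA : ∀ s : ℝ, HasDerivAt A (c' s) s := fun s =>
    integral_hasDerivAt_right (hcc'.intervalIntegrable _ _)
      (hcc'.stronglyMeasurableAtFilter _ _) hcc'.continuousAt
  have hAcont : Continuous A := continuous_iff_continuousAt.2 fun s => (hA s).continuousAt
  set φ : ℝ → ℂ := fun s => f s * Complex.exp (-A s) with hφdef
  have hφcont : ContinuousOn φ (Set.Icc 0 t) :=
    hf.mul ((hAcont.neg.cexp).continuousOn)
  have hφder : ∀ s ∈ Set.Ico 0 t, HasDerivWithinAt φ 0 (Set.Ici s) s := by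
    intro s hs
    have h1 : HasDerivWithinAt (fun u => Complex.exp (-A u))
        (Complex.exp (-A s) * (-c' s)) (Set.Ici s) s :=
      (((hA s).hasDerivWithinAt).neg).cexp
    have h2 := (hder s hs).mul h1
    have : c s * f s * Complex.exp (-A s) + f s * (Complex.exp (-A s) * -c' s) = 0 := by
      rw [hc'eq s ⟨hs.1, hs.2.le⟩]; ring
    rw [this] at h2
    exact h2
  have hconst := constant_of_has_deriv_right_zero hφcont hφder t (Set.right_mem_Icc.2 ht)
  have hA0 : A 0 = 0 := by simp [hAdef]
  have hAt : A t = ∫ s in (0:ℝ)..t, c s := by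
    refine intervalIntegral.integral_congr ?_
    intro u hu
    rw [Set.uIcc_of_le ht] at hu
    exact hc'eq u hu
  have hφt : f t * Complex.exp (-A t) = f 0 := by
    simpa [hφdef, hA0] using hconst
  have := congrArg (· * Complex.exp (A t)) hφt
  simp only [mul_assoc, ← Complex.exp_add] at this
  rw [neg_add_cancel, Complex.exp_zero, mul_one] at this
  rw [this, hAt]

include hW in
lemma Wc {t : ℝ} (ht : 0 ≤ t) :
    ContinuousOn (fun s : ℝ => ((W s : ℂ))) (Set.Icc 0 t) :=
  Complex.continuous_ofReal.comp_continuousOn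
    (hW.mono (fun u hu => hu.1))

include hW hg0 hode in
lemma flow_diff {z w : ℂ} (hz : 0 < z.im) (hw : 0 < w.im) {t : ℝ} (ht0 : 0 ≤ t)
    (hτz : ENNReal.ofReal t < τ z) (hτw : ENNReal.ofReal t < τ w) :
    g t z - g t w = (z - w) * Complex.exp (∫ s in (0:ℝ)..t,
      -2 / ((g s z - (W s : ℂ)) * (g s w - (W s : ℂ)))) := by
  have hcz := flow_cont W g τ hode hz hτz
  have hcw := flow_cont W g τ hode hw hτw
  have hWc := Wc W hW ht0
  have key := ode_linear' (f := fun s => g s z - g s w)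
    (c := fun s => -2 / ((g s z - (W s : ℂ)) * (g s w - (W s : ℂ)))) ht0
    (hcz.sub hcw)
    (continuousOn_const.div ((hcz.sub hWc).mul (hcw.sub hWc))
      (fun s hs => mul_ne_zero (flow_ne W g τ hode hz hτz hs)
        (flow_ne W g τ hode hw hτw hs)))
    (by
      intro s hs
      have hs' : s ∈ Set.Icc 0 t := ⟨hs.1, hs.2.le⟩
      have hdz := (hode z hz s hs.1 (tau_mono τ hs.2.le hτz)).2
      have hdw := (hode w hw s hs.1 (tau_mono τ hs.2.le hτw)).2
      have hAz := flow_ne W g τ hode hz hτz hs'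
      have hAw := flow_ne W g τ hode hw hτw hs'
      have h := hdz.sub hdw
      have heq : 2 / (g s z - (W s : ℂ)) - 2 / (g s w - (W s : ℂ)) =
          -2 / ((g s z - (W s : ℂ)) * (g s w - (W s : ℂ))) * (g s z - g s w) := by
        field_simp
        ring
      rw [heq] at h
      exact h.mono (Set.Ici_subset_Ici.2 hs.1))
  beta_reduce at key
  rw [key, hg0 z hz, hg0 w hw]

include hW hg0 hode in
lemma flow_im {z : ℂ} (hz : 0 < z.im) {t : ℝ} (ht0 : 0 ≤ t)
    (hτz : ENNReal.ofReal t < τ z) :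
    (g t z).im = z.im * Real.exp (∫ s in (0:ℝ)..t,
      -2 / Complex.normSq (g s z - (W s : ℂ))) := by
  have hcz := flow_cont W g τ hode hz hτz
  have hWc := Wc W hW ht0
  have hnsq : ∀ s ∈ Set.Icc 0 t, Complex.normSq (g s z - (W s : ℂ)) ≠ 0 :=
    fun s hs => (Complex.normSq_pos.2 · |>.ne') (flow_ne W g τ hode hz hτz hs)
  have key := ode_linear' (f := fun s => (((g s z).im : ℝ) : ℂ))
    (c := fun s => ((-2 / Complex.normSq (g s z - (W s : ℂ)) : ℝ) : ℂ)) ht0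
    ((Complex.continuous_ofReal.comp Complex.continuous_im).comp_continuousOn hcz)
    (Complex.continuous_ofReal.comp_continuousOn
      (continuousOn_const.div
        ((Complex.continuous_normSq.comp_continuousOn (hcz.sub hWc))) hnsq))
    (by
      intro s hs
      have hs' : s ∈ Set.Icc 0 t := ⟨hs.1, hs.2.le⟩
      have hdz := (hode z hz s hs.1 (tau_mono τ hs.2.le hτz)).2
      have hAz := flow_ne W g τ hode hz hτz hs'
      set L : ℂ →L[ℝ] ℂ := Complex.ofRealCLM.comp Complex.imCLM with hL
      have h := (L.hasFDerivAt.comp_hasDerivWithinAt s hdz)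
      have h2 : L (2 / (g s z - (W s : ℂ))) =
          ((-2 / Complex.normSq (g s z - (W s : ℂ)) : ℝ) : ℂ) * (((g s z).im : ℝ) : ℂ) := by
        have : (2 / (g s z - (W s : ℂ))).im =
            (-2 / Complex.normSq (g s z - (W s : ℂ))) * (g s z).im := by
          rw [Complex.div_im]
          have hns : Complex.normSq (g s z - (W s : ℂ)) ≠ 0 :=
            (Complex.normSq_pos.2 hAz).ne'
          field_simp
          simp only [Complex.im_ofNat, Complex.re_ofNat, Complex.sub_im, Complex.ofReal_im]
          ring
        simp only [hL, ContinuousLinearMap.coe_comp', Function.comp_apply,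
          Complex.imCLM_apply, Complex.ofRealCLM_apply, this]
        push_cast
        ring
      rw [h2] at h
      exact (h.mono (Set.Ici_subset_Ici.2 hs.1)).congr
        (fun u _ => by simp [hL]) (by simp [hL]))
  have : (((g t z).im : ℝ) : ℂ) = ((z.im * Real.exp (∫ s in (0:ℝ)..t,
      -2 / Complex.normSq (g s z - (W s : ℂ))) : ℝ) : ℂ) := by
    beta_reduce at key
    rw [key, hg0 z hz, intervalIntegral.integral_ofReal, Complex.ofReal_mul,
      Complex.ofReal_exp]
  exact_mod_cast this

end L

section M
variable (W : ℝ → ℝ) (g : ℝ → ℂ → ℂ) (τ : ℂ → ℝ≥0∞)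
    (hW : ContinuousOn W (Set.Ici (0 : ℝ)))
    (hτpos : ∀ z : ℂ, 0 < z.im → 0 < τ z)
    (hg0 : ∀ z : ℂ, 0 < z.im → g 0 z = z)
    (hode : ∀ z : ℂ, 0 < z.im → ∀ t : ℝ, 0 ≤ t → ENNReal.ofReal t < τ z →
      g t z ≠ (W t : ℂ) ∧
        HasDerivWithinAt (fun s => g s z) (2 / (g t z - (W t : ℂ)))
          (Set.Ici (0 : ℝ)) t)
    (hmax : ∀ z : ℂ, 0 < z.im → τ z ≠ ⊤ →
      Tendsto (fun t : ℝ => g t z - (W t : ℂ)) (𝓝[<] (τ z).toReal) (𝓝 0))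

include hW hg0 hode in
lemma flow_bound {z w : ℂ} (hz : 0 < z.im) (hw : 0 < w.im) {t : ℝ} (ht0 : 0 ≤ t)
    (hτz : ENNReal.ofReal t < τ z) (hτw : ENNReal.ofReal t < τ w)
    {a b : ℝ} (ha : 0 < a) (hb : 0 < b)
    (hza : ∀ s ∈ Set.Icc 0 t, a ≤ ‖g s z - (W s : ℂ)‖)
    (hwb : ∀ s ∈ Set.Icc 0 t, b ≤ ‖g s w - (W s : ℂ)‖) :
    ‖g t z - g t w‖ ≤ Real.exp (2 / (a * b) * t) * ‖z - w‖ := by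
  have key := flow_diff W g τ hW hg0 hode hz hw ht0 hτz hτw
  set I := ∫ s in (0:ℝ)..t, -2 / ((g s z - (W s : ℂ)) * (g s w - (W s : ℂ))) with hI
  have hInorm : ‖I‖ ≤ 2 / (a * b) * t := by
    have hbd : ∀ s ∈ Set.uIoc (0:ℝ) t,
        ‖-2 / ((g s z - (W s : ℂ)) * (g s w - (W s : ℂ)))‖ ≤ 2 / (a * b) := by
      intro s hs
      rw [Set.uIoc_of_le ht0] at hs
      have hs' : s ∈ Set.Icc 0 t := ⟨hs.1.le, hs.2⟩
      have h1 := hza s hs'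
      have h2 := hwb s hs'
      rw [norm_div, norm_neg, norm_mul]
      have : ‖(2:ℂ)‖ = 2 := by norm_num
      rw [this]
      exact div_le_div_of_nonneg_left (by norm_num) (by positivity)
        (mul_le_mul h1 h2 hb.le (ha.le.trans h1))
    calc ‖I‖ ≤ 2 / (a * b) * |t - 0| :=
          intervalIntegral.norm_integral_le_of_norm_le_const hbd
      _ = 2 / (a * b) * t := by rw [sub_zero, abs_of_nonneg ht0]
  have hre : I.re ≤ 2 / (a * b) * t :=
    (Complex.re_le_norm I).trans hInorm
  calc ‖g t z - g t w‖ = ‖z - w‖ * Real.exp I.re := by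
        rw [key, norm_mul, Complex.norm_exp]
    _ ≤ ‖z - w‖ * Real.exp (2 / (a * b) * t) := by
        exact mul_le_mul_of_nonneg_left (Real.exp_le_exp.2 hre) (norm_nonneg _)
    _ = _ := mul_comm _ _


include hW hτpos hg0 hode hmax in
lemma flow_stable {t : ℝ} (ht0 : 0 ≤ t) {z₀ : ℂ} (hz₀ : 0 < z₀.im)
    (hτ₀ : ENNReal.ofReal t < τ z₀) :
    ∃ ε > 0, ∃ δ > 0, ∃ C, 1 ≤ C ∧ C * ε ≤ δ / 4 ∧
      ∀ z : ℂ, 0 < z.im → ‖z - z₀‖ < ε →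
        ENNReal.ofReal t < τ z ∧
        ∀ s ∈ Set.Icc 0 t, ‖g s z - g s z₀‖ ≤ C * ‖z - z₀‖ ∧
          δ ≤ ‖g s z₀ - (W s : ℂ)‖ ∧ δ / 2 ≤ ‖g s z - (W s : ℂ)‖ := by
  have hc0 := flow_cont W g τ hode hz₀ hτ₀
  have hFc : ContinuousOn (fun s => ‖g s z₀ - (W s : ℂ)‖) (Set.Icc 0 t) :=
    (hc0.sub (Wc W hW ht0)).norm
  obtain ⟨s₀, hs₀, hmin⟩ := isCompact_Icc.exists_isMinOn
    ⟨0, Set.left_mem_Icc.2 ht0⟩ hFc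
  set δ := ‖g s₀ z₀ - (W s₀ : ℂ)‖ with hδdef
  have hδ : 0 < δ := norm_pos_iff.2 (flow_ne W g τ hode hz₀ hτ₀ hs₀)
  have hδle : ∀ s ∈ Set.Icc 0 t, δ ≤ ‖g s z₀ - (W s : ℂ)‖ := fun s hs => hmin hs
  set C := Real.exp (2 / (δ / 2 * δ) * t) with hCdef
  have hC1 : (1:ℝ) ≤ C := Real.one_le_exp (by positivity)
  have hC0 : (0:ℝ) < C := lt_of_lt_of_le one_pos hC1
  set ε := δ / 4 / C with hεdef
  have hε : 0 < ε := by positivity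
  have hCε : C * ε ≤ δ / 4 := by
    rw [hεdef, mul_div_cancel₀ _ hC0.ne']
  have hεδ : ε ≤ δ / 4 := (div_le_self (by positivity) hC1)
  refine ⟨ε, hε, δ, hδ, C, hC1, hCε, ?_⟩
  intro z hz hdist
  set D : ℝ → ℂ := fun s => g s z - g s z₀ with hDdef
  set S := {s : ℝ | s ∈ Set.Icc 0 t ∧ ENNReal.ofReal s < τ z ∧
      ∀ u ∈ Set.Icc 0 s, ‖D u‖ ≤ δ / 2} with hSdef
  have h0S : 0 ∈ S := by
    refine ⟨Set.left_mem_Icc.2 ht0, by simpa using hτpos z hz, ?_⟩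
    intro u hu
    have hu0 : u = 0 := le_antisymm hu.2 hu.1
    subst hu0
    simp only [hDdef, hg0 z hz, hg0 z₀ hz₀]
    have : ‖z - z₀‖ < δ / 4 := hdist.trans_le hεδ
    linarith
  have hSb : BddAbove S := ⟨t, fun s hs => hs.1.2⟩
  have hSne : S.Nonempty := ⟨0, h0S⟩
  set σ := sSup S with hσdef
  have hσ0 : 0 ≤ σ := le_csSup hSb h0S
  have hσt : σ ≤ t := csSup_le hSne (fun s hs => hs.1.2)
  have hmem : ∀ s, 0 ≤ s → s < σ → s ∈ S := by
    intro s h0 hlt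
    obtain ⟨s', hs'S, hss'⟩ := exists_lt_of_lt_csSup hSne hlt
    exact ⟨⟨h0, hss'.le.trans hs'S.1.2⟩, tau_mono τ hss'.le hs'S.2.1,
      fun u hu => hs'S.2.2 u ⟨hu.1, hu.2.trans hss'.le⟩⟩
  have htri : ∀ s, δ ≤ ‖g s z₀ - (W s : ℂ)‖ → ‖D s‖ ≤ δ / 2 →
      δ / 2 ≤ ‖g s z - (W s : ℂ)‖ := by
    intro s h1 h2
    have h3 : g s z₀ - (W s : ℂ) = (g s z - (W s : ℂ)) - D s := by
      simp only [hDdef]; ring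
    have h4 := norm_sub_le (g s z - (W s : ℂ)) (D s)
    rw [← h3] at h4
    linarith
  have hστ : ENNReal.ofReal σ < τ z := by
    by_contra hcon
    push_neg at hcon
    have hτne : τ z ≠ ⊤ := (hcon.trans_lt ENNReal.ofReal_lt_top).ne
    set T := (τ z).toReal with hTdef
    have hTσ : T ≤ σ := ENNReal.toReal_le_of_le_ofReal hσ0 hcon
    have hσT : σ ≤ T := csSup_le hSne (fun s hs =>
      ((ENNReal.ofReal_lt_iff_lt_toReal hs.1.1 hτne).1 hs.2.1).le)
    have hT0 : 0 < T := ENNReal.toReal_pos (hτpos z hz).ne' hτne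
    have hten := hmax z hz hτne
    have h1 : ∀ᶠ s in 𝓝[<] T, ‖g s z - (W s : ℂ)‖ < δ / 2 := by
      have := Metric.tendsto_nhds.1 hten (δ / 2) (by positivity)
      simpa [dist_zero_right] using this
    have h2 : ∀ᶠ s in 𝓝[<] T, 0 < s :=
      (eventually_gt_nhds hT0).filter_mono nhdsWithin_le_nhds
    have h3 : ∀ᶠ s in 𝓝[<] T, s < T :=
      eventually_mem_nhdsWithin.mono (fun s hs => hs)
    obtain ⟨s, hs1, hs2, hs3⟩ := (h1.and (h2.and h3)).exists
    have hsS : s ∈ S := hmem s hs2.le (hs3.trans_le hTσ)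
    have hlow := hδle s ⟨hs2.le, hsS.1.2⟩
    have hD2 := hsS.2.2 s ⟨hs2.le, le_refl s⟩
    have := htri s hlow hD2
    linarith
  have hhalf : ∀ u ∈ Set.Icc 0 σ, ‖D u‖ ≤ δ / 2 := by
    intro u hu
    rcases lt_or_eq_of_le hu.2 with h | h
    · exact (hmem u hu.1 h).2.2 u ⟨hu.1, le_refl u⟩
    · rw [h]
      rcases eq_or_lt_of_le hσ0 with h0 | hσpos
      · exact h0S.2.2 σ ⟨hσ0, h0.ge⟩
      · have hdz := ((hode z hz σ hσ0 hστ).2.sub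
          (hode z₀ hz₀ σ hσ0 (tau_mono τ hσt hτ₀)).2).continuousWithinAt
        have hIci : Set.Ici (0:ℝ) ∈ 𝓝[<] σ :=
          Filter.mem_of_superset
            (mem_nhdsWithin_of_mem_nhds (Ioi_mem_nhds hσpos)) Set.Ioi_subset_Ici_self
        have htend : Tendsto D (𝓝[<] σ) (𝓝 (D σ)) :=
          hdz.mono_left (nhdsWithin_le_of_mem hIci)
        have hevS : ∀ᶠ s in 𝓝[<] σ, ‖D s‖ ≤ δ / 2 := by
          have hIoo : Set.Ioo 0 σ ∈ 𝓝[<] σ :=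
            Filter.inter_mem (mem_nhdsWithin_of_mem_nhds (Ioi_mem_nhds hσpos))
              self_mem_nhdsWithin
          filter_upwards [hIoo] with s hs
          exact (hmem s hs.1.le hs.2).2.2 s ⟨hs.1.le, le_refl s⟩
        exact le_of_tendsto (htend.norm) hevS
  have hgood : ∀ u ∈ Set.Icc 0 σ, δ / 2 ≤ ‖g u z - (W u : ℂ)‖ := fun u hu =>
    htri u (hδle u ⟨hu.1, hu.2.trans hσt⟩) (hhalf u hu)
  have hball : ∀ u ∈ Set.Icc 0 σ, ‖D u‖ ≤ C * ‖z - z₀‖ := by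
    intro u hu
    have hb := flow_bound W g τ hW hg0 hode hz hz₀ hu.1
      (tau_mono τ hu.2 hστ) (tau_mono τ (hu.2.trans hσt) hτ₀)
      (by positivity : (0:ℝ) < δ / 2) hδ
      (fun s hs => hgood s ⟨hs.1, hs.2.trans hu.2⟩)
      (fun s hs => hδle s ⟨hs.1, hs.2.trans (hu.2.trans hσt)⟩)
    refine hb.trans (mul_le_mul_of_nonneg_right ?_ (norm_nonneg _))
    exact Real.exp_le_exp.2 (mul_le_mul_of_nonneg_left (hu.2.trans hσt) (by positivity))
  have hfin : σ = t := by
    by_contra hne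
    have hσlt : σ < t := lt_of_le_of_ne hσt hne
    obtain ⟨η₁, hη₁, hb1⟩ : ∃ η₁ > 0, ∀ s, 0 ≤ s → s < σ + η₁ →
        ENNReal.ofReal s < τ z := by
      rcases eq_or_ne (τ z) ⊤ with h | h
      · exact ⟨1, one_pos, fun s _ _ => h ▸ ENNReal.ofReal_lt_top⟩
      · have hσtoReal : σ < (τ z).toReal :=
          (ENNReal.ofReal_lt_iff_lt_toReal hσ0 h).1 hστ
        exact ⟨(τ z).toReal - σ, by linarith, fun s hs0 hs =>
          (ENNReal.ofReal_lt_iff_lt_toReal hs0 h).2 (by linarith)⟩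
    have hcw : ContinuousWithinAt D (Set.Ici σ) σ :=
      (((hode z hz σ hσ0 hστ).2.sub
        (hode z₀ hz₀ σ hσ0 (tau_mono τ hσt hτ₀)).2).continuousWithinAt).mono
        (Set.Ici_subset_Ici.2 hσ0)
    have hDσ : ‖D σ‖ < δ / 2 := by
      have h1 := hball σ ⟨hσ0, le_refl σ⟩
      have h2 : C * ‖z - z₀‖ < C * ε := mul_lt_mul_of_pos_left hdist hC0
      linarith
    have hev : {s : ℝ | ‖D s‖ < δ / 2} ∈ 𝓝[Set.Ici σ] σ :=
      (hcw.norm).eventually_lt_const hDσ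
    obtain ⟨u₂, hu₂, hsub⟩ := (mem_nhdsGE_iff_exists_Ico_subset).1 hev
    set s' := min t (min (σ + η₁ / 2) ((σ + u₂) / 2)) with hs'def
    have hu₂' : σ < u₂ := hu₂
    have hs'σ : σ < s' :=
      lt_min hσlt (lt_min (by linarith) (by linarith))
    have hs't : s' ≤ t := min_le_left _ _
    have hs'η : s' < σ + η₁ := by
      have h5 : s' ≤ σ + η₁ / 2 :=
        (min_le_right t _).trans (min_le_left (σ + η₁ / 2) ((σ + u₂) / 2))
      linarith
    have hs'u₂ : s' < u₂ := by
      have h5 : s' ≤ (σ + u₂) / 2 :=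
        (min_le_right t _).trans (min_le_right (σ + η₁ / 2) ((σ + u₂) / 2))
      linarith
    have hs'S : s' ∈ S := by
      refine ⟨⟨hσ0.trans hs'σ.le, hs't⟩, hb1 s' (hσ0.trans hs'σ.le) hs'η, ?_⟩
      intro u hu
      rcases le_or_gt u σ with h | h
      · exact hhalf u ⟨hu.1, h⟩
      · exact (hsub ⟨h.le, hu.2.trans_lt hs'u₂⟩).le
    exact absurd (le_csSup hSb hs'S) (not_le.2 hs'σ)
  rw [hfin] at hστ
  refine ⟨hστ, fun s hs => ?_⟩
  have hs' : s ∈ Set.Icc 0 σ := by rw [hfin]; exact hs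
  exact ⟨hball s hs', hδle s hs, hgood s hs'⟩


include hW hτpos hg0 hode hmax in
lemma flow_deriv {t : ℝ} (ht0 : 0 ≤ t) {z₀ : ℂ} (hz₀ : 0 < z₀.im)
    (hτ₀ : ENNReal.ofReal t < τ z₀) :
    HasDerivAt (fun z => g t z) (Complex.exp (∫ s in (0:ℝ)..t,
      -2 / ((g s z₀ - (W s : ℂ)) * (g s z₀ - (W s : ℂ))))) z₀ := by
  obtain ⟨ε, hε, δ, hδ, C, hC1, hCε, hst⟩ :=
    flow_stable W g τ hW hτpos hg0 hode hmax ht0 hz₀ hτ₀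
  have hC0 : (0:ℝ) < C := lt_of_lt_of_le one_pos hC1
  set c : ℂ → ℝ → ℂ :=
    fun z s => -2 / ((g s z - (W s : ℂ)) * (g s z₀ - (W s : ℂ))) with hcdef
  have hopen : IsOpen {w : ℂ | 0 < w.im} :=
    (isOpen_Ioi).preimage Complex.continuous_im
  obtain ⟨r₀, hr₀, hbal⟩ := Metric.isOpen_iff.1 hopen z₀ hz₀
  set r := min ε r₀ with hrdef
  have hr : 0 < r := lt_min hε hr₀
  have hWc := Wc W hW ht0
  have hc0cont : ContinuousOn (fun s => c z₀ s) (Set.Icc 0 t) := by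
    have hcz := flow_cont W g τ hode hz₀ hτ₀
    exact continuousOn_const.div ((hcz.sub hWc).mul (hcz.sub hWc))
      (fun s hs => mul_ne_zero (flow_ne W g τ hode hz₀ hτ₀ hs)
        (flow_ne W g τ hode hz₀ hτ₀ hs))
  -- for z in the ball, properties
  have hzprop : ∀ z : ℂ, z ∈ Metric.ball z₀ r → 0 < z.im ∧ ‖z - z₀‖ < ε := by
    intro z hzb
    have him : 0 < z.im := hbal (Metric.ball_subset_ball (min_le_right ε r₀) hzb)
    have hd : ‖z - z₀‖ < ε := by
      have := Metric.mem_ball.1 hzb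
      rw [dist_eq_norm] at this
      exact this.trans_le (min_le_left ε r₀)
    exact ⟨him, hd⟩
  have hIbound : ∀ z : ℂ, z ∈ Metric.ball z₀ r →
      ‖(∫ s in (0:ℝ)..t, c z s) - ∫ s in (0:ℝ)..t, c z₀ s‖ ≤
        (2 * C / (δ / 2 * (δ * δ)) * t) * ‖z - z₀‖ := by
    intro z hzb
    obtain ⟨him, hd⟩ := hzprop z hzb
    obtain ⟨hτz, hb⟩ := hst z him hd
    have hczcont : ContinuousOn (fun s => c z s) (Set.Icc 0 t) := by
      have hcz := flow_cont W g τ hode him hτz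
      have hcz₀ := flow_cont W g τ hode hz₀ hτ₀
      exact continuousOn_const.div ((hcz.sub hWc).mul (hcz₀.sub hWc))
        (fun s hs => mul_ne_zero (flow_ne W g τ hode him hτz hs)
          (flow_ne W g τ hode hz₀ hτ₀ hs))
    rw [← intervalIntegral.integral_sub
      (hczcont.intervalIntegrable_of_Icc ht0)
      (hc0cont.intervalIntegrable_of_Icc ht0)]
    have hbd : ∀ s ∈ Set.uIoc (0:ℝ) t,
        ‖c z s - c z₀ s‖ ≤ 2 * C / (δ / 2 * (δ * δ)) * ‖z - z₀‖ := by
      intro s hs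
      rw [Set.uIoc_of_le ht0] at hs
      have hs' : s ∈ Set.Icc 0 t := ⟨hs.1.le, hs.2⟩
      obtain ⟨hDb, hδ0, hδz⟩ := hb s hs'
      set A := g s z - (W s : ℂ)
      set B := g s z₀ - (W s : ℂ)
      have hA : A ≠ 0 := by
        intro h; rw [h] at hδz; simp at hδz; linarith
      have hB : B ≠ 0 := by
        intro h; rw [h] at hδ0; simp at hδ0; linarith
      have heq : c z s - c z₀ s = -2 * (B - A) / (A * (B * B)) := by
        simp only [hcdef]
        show -2 / (A * B) - -2 / (B * B) = _
        rw [div_sub_div _ _ (mul_ne_zero hA hB) (mul_ne_zero hB hB),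
          div_eq_div_iff (mul_ne_zero (mul_ne_zero hA hB) (mul_ne_zero hB hB))
            (mul_ne_zero hA (mul_ne_zero hB hB))]
        ring
      rw [heq]
      rw [norm_div, norm_mul, norm_mul, norm_mul]
      have h2 : ‖(-2 : ℂ)‖ = 2 := by norm_num
      rw [h2]
      have hBA : ‖B - A‖ ≤ C * ‖z - z₀‖ := by
        have : B - A = -(g s z - g s z₀) := by simp only [A, B]; ring
        rw [this, norm_neg]; exact hDb
      have hden : δ / 2 * (δ * δ) ≤ ‖A‖ * (‖B‖ * ‖B‖) := by
        have := mul_le_mul hδ0 hδ0 hδ.le (norm_nonneg B)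
        exact mul_le_mul hδz (by nlinarith) (by positivity) (norm_nonneg A)
      calc 2 * ‖B - A‖ / (‖A‖ * (‖B‖ * ‖B‖))
          ≤ 2 * (C * ‖z - z₀‖) / (δ / 2 * (δ * δ)) := by
            apply div_le_div₀ (by positivity) (by linarith [hBA]) (by positivity) hden
        _ = 2 * C / (δ / 2 * (δ * δ)) * ‖z - z₀‖ := by ring
    calc ‖∫ s in (0:ℝ)..t, (c z s - c z₀ s)‖
        ≤ 2 * C / (δ / 2 * (δ * δ)) * ‖z - z₀‖ * |t - 0| :=
          intervalIntegral.norm_integral_le_of_norm_le_const hbd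
      _ = (2 * C / (δ / 2 * (δ * δ)) * t) * ‖z - z₀‖ := by
          rw [sub_zero, abs_of_nonneg ht0]; ring
  -- tendsto of the integrals
  have htint : Tendsto (fun z => ∫ s in (0:ℝ)..t, c z s) (𝓝[≠] z₀)
      (𝓝 (∫ s in (0:ℝ)..t, c z₀ s)) := by
    have h0 : Tendsto (fun z : ℂ => (∫ s in (0:ℝ)..t, c z s) -
        ∫ s in (0:ℝ)..t, c z₀ s) (𝓝[≠] z₀) (𝓝 0) := by
      refine squeeze_zero_norm'
        (a := fun z : ℂ => (2 * C / (δ / 2 * (δ * δ)) * t) * ‖z - z₀‖) ?_ ?_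
      · filter_upwards [mem_nhdsWithin_of_mem_nhds (Metric.ball_mem_nhds z₀ hr)]
          with z hzb
        exact hIbound z hzb
      · have h1 : Tendsto (fun z : ℂ => ‖z - z₀‖) (𝓝[≠] z₀) (𝓝 0) := by
          have h2 : Continuous (fun z : ℂ => ‖z - z₀‖) := by continuity
          have h3 : Tendsto (fun z : ℂ => ‖z - z₀‖) (𝓝 z₀) (𝓝 ‖z₀ - z₀‖) :=
            h2.tendsto z₀
          simp only [sub_self, norm_zero] at h3
          exact h3.mono_left nhdsWithin_le_nhds
        have := h1.const_mul (2 * C / (δ / 2 * (δ * δ)) * t)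
        simpa using this
    have := h0.add_const (∫ s in (0:ℝ)..t, c z₀ s)
    simpa using this
  rw [hasDerivAt_iff_tendsto_slope]
  have hslope : ∀ᶠ z in 𝓝[≠] z₀, slope (fun z => g t z) z₀ z =
      Complex.exp (∫ s in (0:ℝ)..t, c z s) := by
    filter_upwards [mem_nhdsWithin_of_mem_nhds (Metric.ball_mem_nhds z₀ hr),
      self_mem_nhdsWithin] with z hzb hzne
    obtain ⟨him, hd⟩ := hzprop z hzb
    obtain ⟨hτz, -⟩ := hst z him hd
    have hdiff := flow_diff W g τ hW hg0 hode him hz₀ ht0 hτz hτ₀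
    rw [slope_def_field, hdiff]
    rw [div_eq_iff (sub_ne_zero.2 hzne)]
    ring
  refine Tendsto.congr' (EventuallyEq.symm hslope)
    ((Complex.continuous_exp.continuousAt.tendsto).comp htint)

end M


/-- For the chordal Loewner flow `g t z` with continuous real driving term `W`
(maximal solutions with lifetimes `τ z`), for each `t ≥ 0` the set
`H_t = {z ∈ ℍ : τ_z > t}` is open, and `z ↦ g t z` is holomorphic and injective
on `H_t`, mapping `H_t` into the upper half plane. -/
theorem chordal_loewner_flow_holomorphic_injective
    (W : ℝ → ℝ) (hW : ContinuousOn W (Set.Ici (0 : ℝ)))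
    (g : ℝ → ℂ → ℂ) (τ : ℂ → ℝ≥0∞)
    (hτpos : ∀ z : ℂ, 0 < z.im → 0 < τ z)
    (hg0 : ∀ z : ℂ, 0 < z.im → g 0 z = z)
    (hode : ∀ z : ℂ, 0 < z.im → ∀ t : ℝ, 0 ≤ t → ENNReal.ofReal t < τ z →
      g t z ≠ (W t : ℂ) ∧
        HasDerivWithinAt (fun s => g s z) (2 / (g t z - (W t : ℂ)))
          (Set.Ici (0 : ℝ)) t)
    (hmax : ∀ z : ℂ, 0 < z.im → τ z ≠ ⊤ →
      Tendsto (fun t : ℝ => g t z - (W t : ℂ)) (𝓝[<] (τ z).toReal) (𝓝 0)) :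
    ∀ t : ℝ, 0 ≤ t →
      IsOpen {z : ℂ | 0 < z.im ∧ ENNReal.ofReal t < τ z} ∧
      DifferentiableOn ℂ (g t) {z : ℂ | 0 < z.im ∧ ENNReal.ofReal t < τ z} ∧
      Set.InjOn (g t) {z : ℂ | 0 < z.im ∧ ENNReal.ofReal t < τ z} ∧
      Set.MapsTo (g t) {z : ℂ | 0 < z.im ∧ ENNReal.ofReal t < τ z}
        {z : ℂ | 0 < z.im} := by
  intro t ht0
  refine ⟨?_, ?_, ?_, ?_⟩
  · rw [Metric.isOpen_iff]
    rintro z₀ ⟨hz₀, hτ₀⟩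
    obtain ⟨ε, hε, δ, hδ, C, hC1, hCε, hst⟩ :=
      flow_stable W g τ hW hτpos hg0 hode hmax ht0 hz₀ hτ₀
    have hopen : IsOpen {w : ℂ | 0 < w.im} :=
      isOpen_Ioi.preimage Complex.continuous_im
    obtain ⟨r₀, hr₀, hbal⟩ := Metric.isOpen_iff.1 hopen z₀ hz₀
    refine ⟨min ε r₀, lt_min hε hr₀, ?_⟩
    intro z hz
    have him : 0 < z.im := hbal (Metric.ball_subset_ball (min_le_right _ _) hz)
    have hd : ‖z - z₀‖ < ε := by
      rw [Metric.mem_ball, dist_eq_norm] at hz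
      exact hz.trans_le (min_le_left _ _)
    exact ⟨him, (hst z him hd).1⟩
  · rintro z ⟨hz, hτz⟩
    exact ((flow_deriv W g τ hW hτpos hg0 hode hmax ht0 hz
      hτz).differentiableAt).differentiableWithinAt
  · rintro z ⟨hz, hτz⟩ w ⟨hw, hτw⟩ h
    have hdiff := flow_diff W g τ hW hg0 hode hz hw ht0 hτz hτw
    rw [h, sub_self] at hdiff
    have h2 := (mul_eq_zero.1 hdiff.symm).resolve_right (Complex.exp_ne_zero _)
    exact sub_eq_zero.1 h2
  · rintro z ⟨hz, hτz⟩
    have him := flow_im W g τ hW hg0 hode hz ht0 hτz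
    simp only [Set.mem_setOf_eq]
    rw [him]
    exact mul_pos hz (Real.exp_pos _)
end

section
/- Let W : [0,∞) → ℝ be continuous, let g_t denote the chordal Loewner flow, H_t = {z ∈ ℍ : τ_z > t}, and fix z with τ_z > T. Then the complex derivative g_t'(z) = ∂_z g_t(z) exists for t ∈ [0,T], the map t ↦ g_t'(z) is differentiable with ∂_t g_t'(z) = −2 g_t'(z) / (g_t(z) − W_t)², and consequently g_t'(z) = exp( −∫_0^t 2 (g_s(z) − W_s)^{−2} ds ) ≠ 0. -/
open Set Filter Topology intervalIntegral
open scoped ENNReal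

lemma ftc_icc {f : ℝ → ℂ} {T : ℝ} (hf : ContinuousOn f (Icc 0 T)) {t : ℝ} (ht : t ∈ Icc (0:ℝ) T) :
    HasDerivWithinAt (fun u => ∫ s in (0:ℝ)..u, f s) (f t) (Icc 0 T) t := by
  haveI : Fact (t ∈ Icc (0:ℝ) T) := ⟨ht⟩
  refine intervalIntegral.integral_hasDerivWithinAt_right ?_ ?_ (hf t ht)
  · exact (hf.mono (by rw [uIcc_of_le ht.1]; exact Icc_subset_Icc le_rfl ht.2)).intervalIntegrable
  · exact hf.stronglyMeasurableAtFilter_nhdsWithin measurableSet_Icc t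

lemma linODE {L : ℝ} {h a : ℝ → ℂ}
    (ha : ContinuousOn a (Icc 0 L))
    (hh : ∀ t ∈ Icc (0:ℝ) L, HasDerivWithinAt h (a t * h t) (Icc 0 L) t) :
    ∀ t ∈ Icc (0:ℝ) L, h t = h 0 * Complex.exp (∫ s in (0:ℝ)..t, a s) := by
  set A : ℝ → ℂ := fun t => ∫ s in (0:ℝ)..t, a s with hAdef
  have hAderiv : ∀ t ∈ Icc (0:ℝ) L, HasDerivWithinAt A (a t) (Icc 0 L) t :=
    fun t ht => ftc_icc ha ht
  set F : ℝ → ℂ := fun t => h t * Complex.exp (-A t) with hFdef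
  have hFd : ∀ t ∈ Icc (0:ℝ) L, HasDerivWithinAt F 0 (Icc 0 L) t := by
    intro t ht
    have h1 : HasDerivWithinAt (fun s => Complex.exp (-A s))
        (Complex.exp (-A t) * (-a t)) (Icc 0 L) t := by
      have := (Complex.hasDerivAt_exp (-A t)).comp_hasDerivWithinAt t ((hAderiv t ht).neg)
      exact (hAderiv t ht).neg.cexp
    have h2 := (hh t ht).mul h1
    convert h2 using 1
    · rfl
    · rfl
    ring
  have hcontF : ContinuousOn F (Icc 0 L) := fun t ht => (hFd t ht).continuousWithinAt
  have key : ∀ t ∈ Icc (0:ℝ) L, F t = F 0 := by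
    apply constant_of_has_deriv_right_zero hcontF
    intro x hx
    refine (hFd x ⟨hx.1, hx.2.le⟩).mono_of_mem_nhdsWithin ?_
    rw [← Ici_inter_Iic]
    exact inter_mem (mem_of_superset self_mem_nhdsWithin (Ici_subset_Ici.2 hx.1))
      (mem_nhdsWithin_of_mem_nhds (Iic_mem_nhds hx.2))
  intro t ht
  have hF0 : F 0 = h 0 := by simp [hFdef, hAdef]
  have hkey := key t ht
  rw [hF0] at hkey
  calc h t = h t * Complex.exp (-A t) * Complex.exp (A t) := by
        rw [mul_assoc, ← Complex.exp_add]; simp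
    _ = h 0 * Complex.exp (A t) := by
        have : h t * Complex.exp (-A t) = h 0 := hkey
        rw [this]

/-- For the chordal Loewner flow `g t z` with continuous real driving term `W`
and a point `z` with lifetime `τ z > T`: the complex derivative `g_t'(z) = deriv (g t) z`
exists for `t ∈ [0, T]`, the map `t ↦ g_t'(z)` is differentiable with
`∂ₜ g_t'(z) = -2 g_t'(z) / (g_t(z) - W_t)²`, and
`g_t'(z) = exp(-∫₀ᵗ 2 (g_s(z) - W_s)⁻² ds) ≠ 0`. -/
theorem chordal_loewner_spatial_derivative
    (W : ℝ → ℝ) (hW : ContinuousOn W (Set.Ici (0 : ℝ)))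
    (g : ℝ → ℂ → ℂ) (τ : ℂ → ℝ≥0∞)
    (hτpos : ∀ z : ℂ, 0 < z.im → 0 < τ z)
    (hg0 : ∀ z : ℂ, 0 < z.im → g 0 z = z)
    (hode : ∀ z : ℂ, 0 < z.im → ∀ t : ℝ, 0 ≤ t → ENNReal.ofReal t < τ z →
      g t z ≠ (W t : ℂ) ∧
        HasDerivWithinAt (fun s => g s z) (2 / (g t z - (W t : ℂ)))
          (Set.Ici (0 : ℝ)) t)
    (hmax : ∀ z : ℂ, 0 < z.im → τ z ≠ ⊤ →
      Tendsto (fun t : ℝ => g t z - (W t : ℂ)) (𝓝[<] (τ z).toReal) (𝓝 0))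
    (T : ℝ) (hT : 0 ≤ T)
    (z : ℂ) (hz : 0 < z.im) (hτ : ENNReal.ofReal T < τ z) :
    ∀ t ∈ Set.Icc (0 : ℝ) T,
      DifferentiableAt ℂ (g t) z ∧
      HasDerivWithinAt (fun s => deriv (g s) z)
        (-2 * deriv (g t) z / (g t z - (W t : ℂ)) ^ 2)
        (Set.Icc (0 : ℝ) T) t ∧
      deriv (g t) z =
        Complex.exp (-∫ s in (0 : ℝ)..t, 2 * (g s z - (W s : ℂ)) ^ (-2 : ℤ)) ∧
      deriv (g t) z ≠ 0 := by
  have hKc : ContinuousOn (fun s : ℝ => (W s : ℂ)) (Icc 0 T) :=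
    Complex.continuous_ofReal.comp_continuousOn (hW.mono (fun s hs => hs.1))
  -- basic flow facts
  have flow : ∀ w : ℂ, 0 < w.im → ∀ L, 0 ≤ L → ENNReal.ofReal L < τ w →
      (∀ t ∈ Icc (0:ℝ) L, g t w ≠ (W t : ℂ) ∧
        HasDerivWithinAt (fun s => g s w) (2 / (g t w - (W t : ℂ))) (Icc 0 L) t) ∧
      ContinuousOn (fun s => g s w) (Icc 0 L) := by
    intro w hw L _hL0 hLτ
    have hode' : ∀ t ∈ Icc (0:ℝ) L, g t w ≠ (W t : ℂ) ∧
        HasDerivWithinAt (fun s => g s w) (2 / (g t w - (W t : ℂ))) (Icc 0 L) t := by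
      intro t ht
      have h1 : ENNReal.ofReal t < τ w := lt_of_le_of_lt (ENNReal.ofReal_le_ofReal ht.2) hLτ
      obtain ⟨hne, hd⟩ := hode w hw t ht.1 h1
      exact ⟨hne, hd.mono (fun s hs => hs.1)⟩
    exact ⟨hode', fun t ht => (hode' t ht).2.continuousWithinAt⟩
  have hzflow := flow z hz T hT hτ
  -- δ : positive lower bound for ‖g s z - W s‖ on [0,T]
  have hGKc : ContinuousOn (fun s => ‖g s z - (W s : ℂ)‖) (Icc 0 T) :=
    (hzflow.2.sub hKc).norm
  obtain ⟨s₀, hs₀, hmin⟩ := isCompact_Icc.exists_isMinOn (nonempty_Icc.2 hT) hGKc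
  set δ : ℝ := ‖g s₀ z - (W s₀ : ℂ)‖ with hδdef
  have hδ : 0 < δ := norm_pos_iff.2 (sub_ne_zero.2 (hzflow.1 s₀ hs₀).1)
  have hδle : ∀ s ∈ Icc (0:ℝ) T, δ ≤ ‖g s z - (W s : ℂ)‖ := fun s hs => hmin hs
  -- constants
  set C : ℝ := Real.exp (4 / δ ^ 2 * T) with hCdef
  have hCpos : 0 < C := Real.exp_pos _
  have hC1 : 1 ≤ C := Real.one_le_exp (by positivity)
  set ρ : ℝ := δ / 8 / C with hρdef
  have hρpos : 0 < ρ := by positivity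
  have hρC : ρ * C = δ / 8 := by rw [hρdef]; field_simp
  have hρδ : ρ ≤ δ / 8 := by
    rw [hρdef]; exact div_le_self (by positivity) hC1
  -- exact formula for differences
  have formula : ∀ w : ℂ, 0 < w.im → ∀ L, 0 ≤ L → L ≤ T → ENNReal.ofReal L < τ w →
      ∀ t ∈ Icc (0:ℝ) L, g t w - g t z =
        (w - z) * Complex.exp (∫ s in (0:ℝ)..t,
          -2 / ((g s w - (W s : ℂ)) * (g s z - (W s : ℂ)))) := by
    intro w hw L hL0 hLT hLτ
    have hu := flow w hw L hL0 hLτ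
    have hzL : ENNReal.ofReal L < τ z := lt_of_le_of_lt (ENNReal.ofReal_le_ofReal hLT) hτ
    have hG' := flow z hz L hL0 hzL
    have hIccLT : Icc (0:ℝ) L ⊆ Icc (0:ℝ) T := Icc_subset_Icc le_rfl hLT
    have ha : ContinuousOn
        (fun s => (-2 : ℂ) / ((g s w - (W s : ℂ)) * (g s z - (W s : ℂ)))) (Icc 0 L) := by
      apply ContinuousOn.div continuousOn_const
      · exact (hu.2.sub (hKc.mono hIccLT)).mul (hG'.2.sub (hKc.mono hIccLT))
      · intro s hs
        exact mul_ne_zero (sub_ne_zero.2 (hu.1 s hs).1) (sub_ne_zero.2 (hG'.1 s hs).1)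
    have hODE : ∀ t ∈ Icc (0:ℝ) L, HasDerivWithinAt (fun s => g s w - g s z)
        ((-2 / ((g t w - (W t : ℂ)) * (g t z - (W t : ℂ)))) * (g t w - g t z))
        (Icc 0 L) t := by
      intro t ht
      have hd := ((hu.1 t ht).2).sub ((hG'.1 t ht).2)
      convert hd using 1
      · rfl
      · rfl
      have h1 : g t w - (W t : ℂ) ≠ 0 := sub_ne_zero.2 (hu.1 t ht).1
      have h2 : g t z - (W t : ℂ) ≠ 0 := sub_ne_zero.2 (hG'.1 t ht).1
      field_simp
      ring
    have hlin := linODE ha hODE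
    intro t ht
    have h0 : g 0 w - g 0 z = w - z := by rw [hg0 w hw, hg0 z hz]
    rw [hlin t ht, h0]
  -- exponential bound, assuming a lower bound on ‖g s w - W s‖
  have expbound : ∀ w : ℂ, 0 < w.im → ∀ L, 0 ≤ L → L ≤ T → ENNReal.ofReal L < τ w →
      (∀ s ∈ Icc (0:ℝ) L, δ / 2 ≤ ‖g s w - (W s : ℂ)‖) →
      ∀ t ∈ Icc (0:ℝ) L, ‖g t w - g t z‖ ≤ ‖w - z‖ * C := by
    intro w hw L hL0 hLT hLτ hlow t ht
    rw [formula w hw L hL0 hLT hLτ t ht, norm_mul]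
    have hXbound : ‖∫ s in (0:ℝ)..t,
        -2 / ((g s w - (W s : ℂ)) * (g s z - (W s : ℂ)))‖ ≤ 4 / δ ^ 2 * t := by
      have hb := intervalIntegral.norm_integral_le_of_norm_le_const (C := 4 / δ ^ 2)
        (f := fun s => -2 / ((g s w - (W s : ℂ)) * (g s z - (W s : ℂ)))) (a := 0) (b := t) ?_
      · rwa [sub_zero, abs_of_nonneg ht.1] at hb
      · intro s hs
        rw [uIoc_of_le ht.1] at hs
        have hs' : s ∈ Icc (0:ℝ) L := ⟨hs.1.le, hs.2.trans ht.2⟩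
        have h1 : δ / 2 ≤ ‖g s w - (W s : ℂ)‖ := hlow s hs'
        have h2 : δ ≤ ‖g s z - (W s : ℂ)‖ := hδle s ⟨hs'.1, hs'.2.trans hLT⟩
        rw [norm_div, norm_mul]
        have hd2 : (0:ℝ) < δ / 2 := by positivity
        have hmono : δ / 2 * δ ≤ ‖g s w - (W s : ℂ)‖ * ‖g s z - (W s : ℂ)‖ :=
          mul_le_mul h1 h2 hδ.le (le_trans hd2.le h1)
        have hpos : (0:ℝ) < δ / 2 * δ := by positivity
        have hstep : ‖(-2 : ℂ)‖ / (‖g s w - (W s : ℂ)‖ * ‖g s z - (W s : ℂ)‖)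
            ≤ 2 / (δ / 2 * δ) := by
          rw [show ‖(-2 : ℂ)‖ = 2 by simp]
          exact div_le_div_of_nonneg_left (by norm_num) hpos hmono
        have heq2 : (2:ℝ) / (δ / 2 * δ) = 4 / δ ^ 2 := by
          field_simp
          ring
        rw [← heq2]
        exact hstep
    have hre : (∫ s in (0:ℝ)..t,
        -2 / ((g s w - (W s : ℂ)) * (g s z - (W s : ℂ)))).re ≤ 4 / δ ^ 2 * T := by
      have h6 : (∫ s in (0:ℝ)..t,
          -2 / ((g s w - (W s : ℂ)) * (g s z - (W s : ℂ)))).re ≤ ‖∫ s in (0:ℝ)..t,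
          -2 / ((g s w - (W s : ℂ)) * (g s z - (W s : ℂ)))‖ := by
        exact Complex.re_le_norm _
      have h7 : 4 / δ ^ 2 * t ≤ 4 / δ ^ 2 * T :=
        mul_le_mul_of_nonneg_left (ht.2.trans hLT) (by positivity)
      linarith
    have hexp : ‖Complex.exp (∫ s in (0:ℝ)..t,
        -2 / ((g s w - (W s : ℂ)) * (g s z - (W s : ℂ))))‖ ≤ C := by
      rw [Complex.norm_exp, hCdef]
      exact Real.exp_le_exp.2 hre
    exact mul_le_mul_of_nonneg_left hexp (norm_nonneg _)
  -- a priori bound via continuous induction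
  have key : ∀ w : ℂ, 0 < w.im → ‖w - z‖ ≤ ρ → ∀ L, 0 ≤ L → L ≤ T →
      ENNReal.ofReal L < τ w → ∀ t ∈ Icc (0:ℝ) L, ‖g t w - g t z‖ ≤ δ / 4 := by
    intro w hw hwz L hL0 hLT hLτ
    by_contra hcon
    push_neg at hcon
    obtain ⟨t₁, ht₁, ht₁'⟩ := hcon
    set S : Set ℝ := {t | t ∈ Icc (0:ℝ) L ∧ δ / 4 < ‖g t w - g t z‖} with hSdef
    have hSne : S.Nonempty := ⟨t₁, ht₁, ht₁'⟩
    have hSbdd : BddBelow S := ⟨0, fun x hx => hx.1.1⟩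
    set t₀ := sInf S with ht₀def
    have ht₀cl : t₀ ∈ closure S := csInf_mem_closure hSne hSbdd
    have hSsub : S ⊆ Icc (0:ℝ) L := fun x hx => hx.1
    have ht₀mem : t₀ ∈ Icc (0:ℝ) L := isClosed_Icc.closure_subset (closure_mono hSsub ht₀cl)
    have hzL : ENNReal.ofReal L < τ z := lt_of_le_of_lt (ENNReal.ofReal_le_ofReal hLT) hτ
    have hconth : ContinuousOn (fun s => ‖g s w - g s z‖) (Icc 0 L) :=
      ((flow w hw L hL0 hLτ).2.sub (flow z hz L hL0 hzL).2).norm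
    have hlb : δ / 4 ≤ ‖g t₀ w - g t₀ z‖ := by
      haveI hne : (𝓝[S] t₀).NeBot := mem_closure_iff_nhdsWithin_neBot.1 ht₀cl
      refine ge_of_tendsto ((hconth t₀ ht₀mem).mono hSsub) ?_
      exact eventually_nhdsWithin_of_forall (fun x hx => hx.2.le)
    have hsmall : ∀ s ∈ Icc (0:ℝ) L, s < t₀ → ‖g s w - g s z‖ ≤ δ / 4 := by
      intro s hs hst
      by_contra h
      push_neg at h
      exact absurd (csInf_le hSbdd ⟨hs, h⟩) (not_le.2 hst)
    have hsmall8 : ∀ s ∈ Icc (0:ℝ) L, s < t₀ → ‖g s w - g s z‖ ≤ δ / 8 := by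
      intro s hs hst
      have hLs : ENNReal.ofReal s < τ w := lt_of_le_of_lt (ENNReal.ofReal_le_ofReal hs.2) hLτ
      have hsT : s ≤ T := hs.2.trans hLT
      have heb := expbound w hw s hs.1 hsT hLs ?_ s ⟨hs.1, le_rfl⟩
      · calc ‖g s w - g s z‖ ≤ ‖w - z‖ * C := heb
          _ ≤ ρ * C := by gcongr
          _ = δ / 8 := hρC
      · intro σ hσ
        have hσL : σ ∈ Icc (0:ℝ) L := ⟨hσ.1, hσ.2.trans hs.2⟩
        have h4 : ‖g σ w - g σ z‖ ≤ δ / 4 := hsmall σ hσL (lt_of_le_of_lt hσ.2 hst)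
        have h5 : δ ≤ ‖g σ z - (W σ : ℂ)‖ := hδle σ ⟨hσL.1, hσL.2.trans hLT⟩
        have htri : ‖g σ z - (W σ : ℂ)‖ ≤ ‖g σ w - (W σ : ℂ)‖ + ‖g σ w - g σ z‖ := by
          have hrw : g σ z - (W σ : ℂ) = (g σ w - (W σ : ℂ)) - (g σ w - g σ z) := by ring
          rw [hrw]
          exact norm_sub_le _ _
        linarith
    have hub : ‖g t₀ w - g t₀ z‖ ≤ δ / 8 := by
      rcases eq_or_lt_of_le ht₀mem.1 with h0 | h0
      · have hgz : g 0 w - g 0 z = w - z := by rw [hg0 w hw, hg0 z hz]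
        rw [← h0, hgz]
        exact hwz.trans hρδ
      · have hIoo : Ioo (0:ℝ) t₀ ⊆ Icc 0 L := fun x hx => ⟨hx.1.le, hx.2.le.trans ht₀mem.2⟩
        haveI := right_nhdsWithin_Ioo_neBot h0
        refine le_of_tendsto ((hconth t₀ ht₀mem).mono hIoo) ?_
        exact eventually_nhdsWithin_of_forall (fun x hx => hsmall8 x (hIoo hx) hx.2)
    linarith
  -- survival past time T for w close to z
  have hlife : ∀ w : ℂ, 0 < w.im → ‖w - z‖ ≤ ρ → ENNReal.ofReal T < τ w := by
    intro w hw hwz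
    by_contra hcon
    push_neg at hcon
    have hwtop : τ w ≠ ⊤ := ne_top_of_le_ne_top ENNReal.ofReal_ne_top hcon
    set t' := (τ w).toReal with ht'def
    have ht'pos : 0 < t' := ENNReal.toReal_pos (hτpos w hw).ne' hwtop
    have ht'T : t' ≤ T := by
      calc t' ≤ (ENNReal.ofReal T).toReal := ENNReal.toReal_mono ENNReal.ofReal_ne_top hcon
        _ = T := ENNReal.toReal_ofReal hT
    have htend := hmax w hw hwtop
    have h1 : ∀ᶠ t in 𝓝[<] t', ‖g t w - (W t : ℂ)‖ < δ / 2 := by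
      filter_upwards [htend (Metric.ball_mem_nhds (0 : ℂ) (by positivity : (0:ℝ) < δ / 2))]
        with t ht
      simpa [dist_eq_norm] using ht
    have h2 : Ioo (0:ℝ) t' ∈ 𝓝[<] t' := Ioo_mem_nhdsLT_of_mem ⟨ht'pos, le_rfl⟩
    obtain ⟨t, hball, hIoo⟩ := (h1.and (eventually_of_mem h2 fun x hx => hx)).exists
    have hτt : ENNReal.ofReal t < τ w := by
      rw [← ENNReal.ofReal_toReal hwtop]
      exact (ENNReal.ofReal_lt_ofReal_iff ht'pos).2 hIoo.2
    have hkey := key w hw hwz t hIoo.1.le (hIoo.2.le.trans ht'T) hτt t ⟨hIoo.1.le, le_rfl⟩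
    have h5 : δ ≤ ‖g t z - (W t : ℂ)‖ := hδle t ⟨hIoo.1.le, hIoo.2.le.trans ht'T⟩
    have htri : ‖g t z - (W t : ℂ)‖ ≤ ‖g t w - (W t : ℂ)‖ + ‖g t w - g t z‖ := by
      have hrw : g t z - (W t : ℂ) = (g t w - (W t : ℂ)) - (g t w - g t z) := by ring
      rw [hrw]; exact norm_sub_le _ _
    linarith
  -- lower bound for nearby points and uniform closeness
  have hlowT : ∀ w : ℂ, 0 < w.im → ‖w - z‖ ≤ ρ →
      ∀ σ ∈ Icc (0:ℝ) T, δ / 2 ≤ ‖g σ w - (W σ : ℂ)‖ := by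
    intro w hw hwz σ hσ
    have hτw := hlife w hw hwz
    have h4 := key w hw hwz T hT le_rfl hτw σ hσ
    have h5 := hδle σ hσ
    have htri : ‖g σ z - (W σ : ℂ)‖ ≤ ‖g σ w - (W σ : ℂ)‖ + ‖g σ w - g σ z‖ := by
      have hrw : g σ z - (W σ : ℂ) = (g σ w - (W σ : ℂ)) - (g σ w - g σ z) := by ring
      rw [hrw]; exact norm_sub_le _ _
    linarith
  have hclose : ∀ w : ℂ, 0 < w.im → ‖w - z‖ ≤ ρ →
      ∀ s ∈ Icc (0:ℝ) T, ‖g s w - g s z‖ ≤ ‖w - z‖ * C := by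
    intro w hw hwz s hs
    exact expbound w hw T hT le_rfl (hlife w hw hwz) (hlowT w hw hwz) s hs
  -- spatial derivative
  have hEderiv : ∀ t ∈ Icc (0:ℝ) T, HasDerivAt (g t)
      (Complex.exp (∫ s in (0:ℝ)..t,
        -2 / ((g s z - (W s : ℂ)) * (g s z - (W s : ℂ))))) z := by
    intro t ht
    rw [hasDerivAt_iff_tendsto_slope]
    set r : ℝ := min ρ z.im with hrdef
    have hrpos : 0 < r := lt_min hρpos hz
    have hball : Metric.ball z r \ {z} ∈ 𝓝[≠] z :=
      diff_mem_nhdsWithin_compl (Metric.ball_mem_nhds z hrpos) {z}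
    have hwprops : ∀ w : ℂ, w ∈ Metric.ball z r \ {z} →
        0 < w.im ∧ ‖w - z‖ ≤ ρ ∧ w ≠ z := by
      intro w hw
      have h1 : ‖w - z‖ < r := mem_ball_iff_norm.1 hw.1
      have h2 : |w.im - z.im| ≤ ‖w - z‖ := by
        have h3 := Complex.abs_im_le_norm (w - z)
        rw [Complex.sub_im] at h3
        exact h3
      have h4 : |w.im - z.im| < z.im := lt_of_le_of_lt h2 (h1.trans_le (min_le_right _ _))
      refine ⟨by linarith [(abs_lt.1 h4).1], (h1.trans_le (min_le_left _ _)).le, ?_⟩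
      simpa using hw.2
    have heq : ∀ᶠ w in 𝓝[≠] z, slope (g t) z w =
        Complex.exp (∫ s in (0:ℝ)..t,
          -2 / ((g s w - (W s : ℂ)) * (g s z - (W s : ℂ)))) := by
      filter_upwards [hball] with w hw
      obtain ⟨hwim, hwz, hwne⟩ := hwprops w hw
      have hform := formula w hwim T hT le_rfl (hlife w hwim hwz) t ht
      rw [slope_def_field, hform]
      exact mul_div_cancel_left₀ _ (sub_ne_zero.2 hwne)
    rw [tendsto_congr' heq]
    have hAtend : Tendsto (fun w : ℂ => ∫ s in (0:ℝ)..t,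
        -2 / ((g s w - (W s : ℂ)) * (g s z - (W s : ℂ)))) (𝓝[≠] z)
        (𝓝 (∫ s in (0:ℝ)..t, -2 / ((g s z - (W s : ℂ)) * (g s z - (W s : ℂ))))) := by
      set Az : ℂ := ∫ s in (0:ℝ)..t, -2 / ((g s z - (W s : ℂ)) * (g s z - (W s : ℂ))) with hAz
      have hsub : Tendsto (fun w : ℂ => (∫ s in (0:ℝ)..t,
          -2 / ((g s w - (W s : ℂ)) * (g s z - (W s : ℂ)))) - Az) (𝓝[≠] z) (𝓝 0) := by
        apply squeeze_zero_norm' (a := fun w : ℂ => 4 * C / δ ^ 3 * T * ‖w - z‖)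
        · filter_upwards [hball] with w hw
          obtain ⟨hwim, hwz, hwne⟩ := hwprops w hw
          have hτw := hlife w hwim hwz
          have hflw := flow w hwim T hT hτw
          have hIccsub : Icc (0:ℝ) t ⊆ Icc (0:ℝ) T := Icc_subset_Icc le_rfl ht.2
          have haw : ContinuousOn
              (fun s => (-2:ℂ) / ((g s w - (W s : ℂ)) * (g s z - (W s : ℂ)))) (Icc 0 T) := by
            apply ContinuousOn.div continuousOn_const
            · exact (hflw.2.sub hKc).mul (hzflow.2.sub hKc)
            · intro s hs
              exact mul_ne_zero (sub_ne_zero.2 (hflw.1 s hs).1)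
                (sub_ne_zero.2 (hzflow.1 s hs).1)
          have haz : ContinuousOn
              (fun s => (-2:ℂ) / ((g s z - (W s : ℂ)) * (g s z - (W s : ℂ)))) (Icc 0 T) := by
            apply ContinuousOn.div continuousOn_const
            · exact (hzflow.2.sub hKc).mul (hzflow.2.sub hKc)
            · intro s hs
              exact mul_ne_zero (sub_ne_zero.2 (hzflow.1 s hs).1)
                (sub_ne_zero.2 (hzflow.1 s hs).1)
          have hI1 : IntervalIntegrable
              (fun s => (-2:ℂ) / ((g s w - (W s : ℂ)) * (g s z - (W s : ℂ)))) MeasureTheory.volume 0 t :=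
            ((haw.mono hIccsub).mono (by rw [uIcc_of_le ht.1])).intervalIntegrable
          have hI2 : IntervalIntegrable
              (fun s => (-2:ℂ) / ((g s z - (W s : ℂ)) * (g s z - (W s : ℂ)))) MeasureTheory.volume 0 t :=
            ((haz.mono hIccsub).mono (by rw [uIcc_of_le ht.1])).intervalIntegrable
          rw [hAz, ← intervalIntegral.integral_sub hI1 hI2]
          have hb := intervalIntegral.norm_integral_le_of_norm_le_const
            (C := 4 * C / δ ^ 3 * ‖w - z‖)
            (f := fun s => -2 / ((g s w - (W s : ℂ)) * (g s z - (W s : ℂ)))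
              - -2 / ((g s z - (W s : ℂ)) * (g s z - (W s : ℂ)))) (a := 0) (b := t) ?_
          · rw [sub_zero, abs_of_nonneg ht.1] at hb
            have h8 : 4 * C / δ ^ 3 * ‖w - z‖ * t ≤ 4 * C / δ ^ 3 * ‖w - z‖ * T :=
              mul_le_mul_of_nonneg_left ht.2 (by positivity)
            have h9 : 4 * C / δ ^ 3 * ‖w - z‖ * T = 4 * C / δ ^ 3 * T * ‖w - z‖ := by ring
            linarith [hb]
          · intro s hs
            rw [uIoc_of_le ht.1] at hs
            have hsT : s ∈ Icc (0:ℝ) T := ⟨hs.1.le, hs.2.trans ht.2⟩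
            have hne1 : g s w - (W s : ℂ) ≠ 0 := sub_ne_zero.2 (hflw.1 s hsT).1
            have hne2 : g s z - (W s : ℂ) ≠ 0 := sub_ne_zero.2 (hzflow.1 s hsT).1
            have hid : -2 / ((g s w - (W s : ℂ)) * (g s z - (W s : ℂ)))
                - -2 / ((g s z - (W s : ℂ)) * (g s z - (W s : ℂ)))
                = 2 * (g s w - g s z) /
                  ((g s w - (W s : ℂ)) * (g s z - (W s : ℂ)) ^ 2) := by
              field_simp
              ring
            show ‖-2 / ((g s w - (W s : ℂ)) * (g s z - (W s : ℂ)))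
                - -2 / ((g s z - (W s : ℂ)) * (g s z - (W s : ℂ)))‖
              ≤ 4 * C / δ ^ 3 * ‖w - z‖
            rw [hid, norm_div, norm_mul, norm_mul, norm_pow]
            have hl1 : δ / 2 ≤ ‖g s w - (W s : ℂ)‖ := hlowT w hwim hwz s hsT
            have hl2 : δ ≤ ‖g s z - (W s : ℂ)‖ := hδle s hsT
            have hcl : ‖g s w - g s z‖ ≤ ‖w - z‖ * C := hclose w hwim hwz s hsT
            have hd2 : (0:ℝ) < δ / 2 := by positivity
            have hnum : ‖(2:ℂ)‖ * ‖g s w - g s z‖ ≤ 2 * (‖w - z‖ * C) := by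
              rw [show ‖(2:ℂ)‖ = 2 by simp]
              exact mul_le_mul_of_nonneg_left hcl (by norm_num)
            have hden : δ / 2 * δ ^ 2 ≤ ‖g s w - (W s : ℂ)‖ * ‖g s z - (W s : ℂ)‖ ^ 2 := by
              have := pow_le_pow_left₀ hδ.le hl2 2
              exact mul_le_mul hl1 this (by positivity) (norm_nonneg _)
            have hdenpos : (0:ℝ) < δ / 2 * δ ^ 2 := by positivity
            have hfin : ‖(2:ℂ)‖ * ‖g s w - g s z‖ /
                (‖g s w - (W s : ℂ)‖ * ‖g s z - (W s : ℂ)‖ ^ 2)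
                ≤ 2 * (‖w - z‖ * C) / (δ / 2 * δ ^ 2) :=
              div_le_div₀ (by positivity) hnum hdenpos hden
            have heq3 : 2 * (‖w - z‖ * C) / (δ / 2 * δ ^ 2) = 4 * C / δ ^ 3 * ‖w - z‖ := by
              field_simp
              ring
            rw [← heq3]
            exact hfin
        · have hcont : Tendsto (fun w : ℂ => 4 * C / δ ^ 3 * T * ‖w - z‖) (𝓝 z)
              (𝓝 (4 * C / δ ^ 3 * T * ‖z - z‖)) := by
            exact (tendsto_const_nhds.mul ((continuous_id.sub continuous_const).norm.tendsto z))
          simpa using hcont.mono_left nhdsWithin_le_nhds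
      have := hsub.add (tendsto_const_nhds (x := Az))
      simpa using this
    exact (Complex.continuous_exp.tendsto _).comp hAtend
  -- conclusions
  have hIeq : ∀ u ∈ Icc (0:ℝ) T, (∫ s in (0:ℝ)..u,
      -2 / ((g s z - (W s : ℂ)) * (g s z - (W s : ℂ))))
      = -(∫ s in (0:ℝ)..u, 2 * (g s z - (W s : ℂ)) ^ (-2 : ℤ)) := by
    intro u _hu
    rw [← intervalIntegral.integral_neg]
    apply intervalIntegral.integral_congr
    intro s _hs
    show -2 / ((g s z - (W s : ℂ)) * (g s z - (W s : ℂ)))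
      = -(2 * (g s z - (W s : ℂ)) ^ (-2 : ℤ))
    rw [zpow_neg, show ((2:ℤ) : ℤ) = 2 from rfl, zpow_two, ← div_eq_mul_inv, neg_div]
  have hDval : ∀ u ∈ Icc (0:ℝ) T, deriv (g u) z =
      Complex.exp (-(∫ s in (0:ℝ)..u, 2 * (g s z - (W s : ℂ)) ^ (-2 : ℤ))) := by
    intro u hu
    rw [(hEderiv u hu).deriv, hIeq u hu]
  intro t ht
  refine ⟨(hEderiv t ht).differentiableAt, ?_, hDval t ht, by
    rw [hDval t ht]; exact Complex.exp_ne_zero _⟩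
  -- time derivative of the spatial derivative
  have hfcont : ContinuousOn (fun s => (2:ℂ) * (g s z - (W s : ℂ)) ^ (-2 : ℤ)) (Icc 0 T) := by
    have h1 : ContinuousOn
        (fun s => (2:ℂ) / ((g s z - (W s : ℂ)) * (g s z - (W s : ℂ)))) (Icc 0 T) := by
      apply ContinuousOn.div continuousOn_const
      · exact (hzflow.2.sub hKc).mul (hzflow.2.sub hKc)
      · intro s hs
        exact mul_ne_zero (sub_ne_zero.2 (hzflow.1 s hs).1) (sub_ne_zero.2 (hzflow.1 s hs).1)
    refine h1.congr ?_
    intro s _hs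
    show (2:ℂ) * (g s z - (W s : ℂ)) ^ (-2 : ℤ)
      = 2 / ((g s z - (W s : ℂ)) * (g s z - (W s : ℂ)))
    rw [zpow_neg, zpow_two, ← div_eq_mul_inv]
  have hIderiv : HasDerivWithinAt (fun u => ∫ s in (0:ℝ)..u,
      2 * (g s z - (W s : ℂ)) ^ (-2 : ℤ))
      ((2:ℂ) * (g t z - (W t : ℂ)) ^ (-2 : ℤ)) (Icc 0 T) t := ftc_icc hfcont ht
  have hExpDeriv : HasDerivWithinAt
      (fun u => Complex.exp (-(∫ s in (0:ℝ)..u, 2 * (g s z - (W s : ℂ)) ^ (-2 : ℤ))))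
      (Complex.exp (-(∫ s in (0:ℝ)..t, 2 * (g s z - (W s : ℂ)) ^ (-2 : ℤ))) *
        (-((2:ℂ) * (g t z - (W t : ℂ)) ^ (-2 : ℤ)))) (Icc 0 T) t := by
    have := (Complex.hasDerivAt_exp
        (-(∫ s in (0:ℝ)..t, 2 * (g s z - (W s : ℂ)) ^ (-2 : ℤ)))).comp_hasDerivWithinAt t
        (hIderiv.neg)
    exact hIderiv.neg.cexp
  have hcongr : HasDerivWithinAt (fun u => deriv (g u) z)
      (Complex.exp (-(∫ s in (0:ℝ)..t, 2 * (g s z - (W s : ℂ)) ^ (-2 : ℤ))) *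
        (-((2:ℂ) * (g t z - (W t : ℂ)) ^ (-2 : ℤ)))) (Icc 0 T) t :=
    hExpDeriv.congr (fun u hu => hDval u hu) (hDval t ht)
  convert hcongr using 1
  rw [hDval t ht]
  have hne : g t z - (W t : ℂ) ≠ 0 := sub_ne_zero.2 (hzflow.1 t ht).1
  rw [zpow_neg, zpow_two]
  field_simp
end

section
/- Let W : [0,∞) → ℂ be continuous with |W_t| = 1 for all t, let z ∈ ℂ with 0 < |z| < 1, and let g : [0, τ) → ℂ be the maximal solution of the radial Loewner equation ∂_t g(t) = −g(t)(g(t) + W_t)/(g(t) − W_t) with g(0) = z. Then for all t ∈ [0, τ): |g(t)| < 1, and d/dt |g(t)|² = 2 |g(t)|² (1 − |g(t)|²) / |g(t) − W_t|² > 0; in particular t ↦ |g(t)| is strictly increasing. -/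
open Set Filter Topology
open scoped ENNReal

lemma keyRe (a w : ℂ) (hne : a ≠ w) (hw : Complex.normSq w = 1) :
    2 * ((starRingEnd ℂ) a * (-a * (a + w) / (a - w))).re
      = 2 * Complex.normSq a * (1 - Complex.normSq a) / Complex.normSq (a - w) := by
  have h : a - w ≠ 0 := sub_ne_zero.2 hne
  have hD : Complex.normSq (a - w) ≠ 0 := by simpa using h
  set u : ℂ := (starRingEnd ℂ) a with hu
  set s : ℂ := (starRingEnd ℂ) w with hsdef
  have hws : w * s = 1 := by rw [hsdef, Complex.mul_conj, hw]; simp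
  have hd2 : u - s ≠ 0 := by
    rw [hu, hsdef, ← map_sub]
    simp only [ne_eq, map_eq_zero]
    exact h
  set x : ℂ := u * (-a * (a + w) / (a - w)) with hx
  have e2 : (starRingEnd ℂ) x = a * (-u * (u + s) / (u - s)) := by
    rw [hx, hu, hsdef]
    simp only [map_mul, map_div₀, map_neg, map_add, map_sub, Complex.conj_conj]
  have hsum : x + (starRingEnd ℂ) x
      = ((2 * Complex.normSq a * (1 - Complex.normSq a) / Complex.normSq (a - w) : ℝ) : ℂ) := by
    have h1 : ((Complex.normSq a : ℝ) : ℂ) = a * u := (Complex.mul_conj a).symm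
    have h2 : ((Complex.normSq (a - w) : ℝ) : ℂ) = (a - w) * (u - s) := by
      rw [← Complex.mul_conj (a - w), map_sub, hu, hsdef]
    rw [e2, hx]
    rw [mul_div_assoc']
    rw [mul_div_assoc']
    rw [div_add_div _ _ h hd2]
    push_cast [h1, h2]
    rw [div_eq_div_iff (mul_ne_zero h hd2) (mul_ne_zero h hd2)]
    linear_combination (2 * a * u * (a - w) * (u - s)) * hws
  have hre := congrArg Complex.re hsum
  simp only [Complex.add_re, Complex.conj_re, Complex.ofReal_re] at hre
  linarith [hre]

lemma hasDerivWithinAt_normSq_comp {g : ℝ → ℂ} {v : ℂ} {s : Set ℝ} {t : ℝ}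
    (hg : HasDerivWithinAt g v s t) :
    HasDerivWithinAt (fun s => Complex.normSq (g s))
      (2 * ((starRingEnd ℂ) (g t) * v).re) s t := by
  have hre : HasDerivWithinAt (fun s => (g s).re) v.re s t := by
    have := Complex.reCLM.hasFDerivAt.comp_hasDerivWithinAt t hg
    exact this
  have him : HasDerivWithinAt (fun s => (g s).im) v.im s t := by
    have := Complex.imCLM.hasFDerivAt.comp_hasDerivWithinAt t hg
    exact this
  have h2 := (hre.mul hre).add (him.mul him)
  have heq : (fun s => Complex.normSq (g s))
      = fun s => (g s).re * (g s).re + (g s).im * (g s).im := by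
    funext s; exact Complex.normSq_apply _
  rw [heq]
  convert h2 using 1
  rotate_left 3
  simp only [Complex.mul_re, Complex.conj_re, Complex.conj_im]
  ring
  all_goals rfl

/-- For a solution `g` of the radial Loewner equation
`∂ₜ g = -g (g + W)/(g - W)` on `[0, τ)` with `|W_t| = 1`, started at `z` with
`0 < |z| < 1`: the modulus stays below `1`, the squared modulus satisfies
`d/dt |g(t)|² = 2 |g(t)|² (1 - |g(t)|²)/|g(t) - W_t|² > 0`, and `t ↦ |g(t)|`
is strictly increasing on `[0, τ)`. -/
theorem radial_loewner_abs_strictMono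
    (W : ℝ → ℂ) (hW : ContinuousOn W (Set.Ici (0 : ℝ)))
    (hW1 : ∀ t : ℝ, 0 ≤ t → ‖W t‖ = 1)
    (z : ℂ) (hz0 : 0 < ‖z‖) (hz1 : ‖z‖ < 1)
    (τ : ℝ≥0∞) (g : ℝ → ℂ) (hg0 : g 0 = z)
    (hode : ∀ t : ℝ, 0 ≤ t → ENNReal.ofReal t < τ →
      g t ≠ W t ∧
        HasDerivWithinAt g (-g t * (g t + W t) / (g t - W t))
          (Set.Ici (0 : ℝ)) t) :
    (∀ t : ℝ, 0 ≤ t → ENNReal.ofReal t < τ →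
        ‖g t‖ < 1 ∧
        HasDerivWithinAt (fun s => ‖g s‖ ^ 2)
          (2 * ‖g t‖ ^ 2 * (1 - ‖g t‖ ^ 2) /
            ‖g t - W t‖ ^ 2)
          (Set.Ici (0 : ℝ)) t ∧
        0 < 2 * ‖g t‖ ^ 2 * (1 - ‖g t‖ ^ 2) /
            ‖g t - W t‖ ^ 2) ∧
      StrictMonoOn (fun s => ‖g s‖)
        {t : ℝ | 0 ≤ t ∧ ENNReal.ofReal t < τ} := by
  have hz : z ≠ 0 := by
    intro h0; rw [h0] at hz0; simp at hz0
  have hr0 : Complex.normSq (g 0) = Complex.normSq z := by rw [hg0]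
  have hr0lt : Complex.normSq (g 0) < 1 := by
    rw [hr0, ← Complex.sq_norm]; nlinarith [norm_nonneg z]
  have hr0pos : 0 < Complex.normSq (g 0) := by
    rw [hr0]; exact Complex.normSq_pos.2 hz
  have hWnormSq : ∀ t : ℝ, 0 ≤ t → Complex.normSq (W t) = 1 := by
    intro t ht; rw [← Complex.sq_norm, hW1 t ht]; norm_num
  -- derivative of normSq ∘ g
  have hderiv : ∀ t : ℝ, 0 ≤ t → ENNReal.ofReal t < τ →
      HasDerivWithinAt (fun s => Complex.normSq (g s))
        (2 * Complex.normSq (g t) * (1 - Complex.normSq (g t)) /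
          Complex.normSq (g t - W t)) (Ici 0) t := by
    intro t ht hτ
    obtain ⟨hne, hd⟩ := hode t ht hτ
    have := hasDerivWithinAt_normSq_comp hd
    rwa [keyRe (g t) (W t) hne (hWnormSq t ht)] at this
  have hdown : ∀ {t u : ℝ}, ENNReal.ofReal t < τ → u ≤ t → ENNReal.ofReal u < τ :=
    fun ht hut => lt_of_le_of_lt (ENNReal.ofReal_le_ofReal hut) ht
  have hcontW : ∀ t : ℝ, 0 ≤ t → ENNReal.ofReal t < τ →
      ContinuousWithinAt (fun s => Complex.normSq (g s)) (Ici 0) t :=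
    fun t ht hτ => (hderiv t ht hτ).continuousWithinAt
  -- the barrier: normSq (g t) < 1 on the domain
  have hlt : ∀ t : ℝ, 0 ≤ t → ENNReal.ofReal t < τ → Complex.normSq (g t) < 1 := by
    by_contra hcon
    push_neg at hcon
    obtain ⟨t1, ht1a, ht1b, ht1c⟩ := hcon
    have hsubdom : ∀ u : ℝ, 0 ≤ u → u ≤ t1 → ENNReal.ofReal u < τ :=
      fun u hu hut => hdown ht1b hut
    have hrc : ContinuousOn (fun s => Complex.normSq (g s)) (Icc 0 t1) :=
      fun u hu => (hcontW u hu.1 (hsubdom u hu.1 hu.2)).mono (fun x hx => hx.1)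
    set A : Set ℝ := {u ∈ Icc (0:ℝ) t1 | 1 ≤ Complex.normSq (g u)} with hA
    have hAne : A.Nonempty := ⟨t1, ⟨⟨ht1a, le_refl t1⟩, ht1c⟩⟩
    have hAbdd : BddBelow A := ⟨0, fun u hu => hu.1.1⟩
    set t₀ := sInf A with ht₀def
    have ht₀Icc : t₀ ∈ Icc (0:ℝ) t1 :=
      ⟨le_csInf hAne (fun u hu => hu.1.1), csInf_le hAbdd ⟨⟨ht1a, le_refl t1⟩, ht1c⟩⟩
    have ht₀dom : ENNReal.ofReal t₀ < τ := hsubdom t₀ ht₀Icc.1 ht₀Icc.2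
    have hge : 1 ≤ Complex.normSq (g t₀) := by
      have hct : ContinuousWithinAt (fun s => Complex.normSq (g s)) A t₀ :=
        (hrc t₀ ht₀Icc).mono (fun u hu => hu.1)
      have hnb : (𝓝[A] t₀).NeBot :=
        mem_closure_iff_nhdsWithin_neBot.1 (csInf_mem_closure hAne hAbdd)
      exact ge_of_tendsto hct (eventually_nhdsWithin_of_forall (fun u hu => hu.2))
    have ht₀pos : 0 < t₀ := by
      rcases eq_or_lt_of_le ht₀Icc.1 with h | h
      · exfalso; rw [← h] at hge; linarith
      · exact h
    have hbefore : ∀ u : ℝ, 0 ≤ u → u < t₀ → Complex.normSq (g u) < 1 := by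
      intro u hu hu'
      by_contra hge1; push_neg at hge1
      exact absurd (csInf_le hAbdd ⟨⟨hu, hu'.le.trans ht₀Icc.2⟩, hge1⟩) (not_le.2 hu')
    have ht₀le : Complex.normSq (g t₀) ≤ 1 := by
      have hca : ContinuousAt (fun s => Complex.normSq (g s)) t₀ :=
        (hcontW t₀ ht₀Icc.1 ht₀dom).continuousAt (Ici_mem_nhds ht₀pos)
      refine le_of_tendsto (hca.continuousWithinAt (s := Iio t₀)) ?_
      filter_upwards [Ioo_mem_nhdsLT_of_mem (⟨ht₀pos, le_refl t₀⟩ : t₀ ∈ Ioc 0 t₀)] with u hu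
      exact (hbefore u hu.1.le hu.2).le
    have ht₀eq : Complex.normSq (g t₀) = 1 := le_antisymm ht₀le hge
    have hle1 : ∀ u : ℝ, 0 ≤ u → u ≤ t₀ → Complex.normSq (g u) ≤ 1 := by
      intro u hu hut
      rcases eq_or_lt_of_le hut with h | h
      · rw [h]; exact ht₀le
      · exact (hbefore u hu h).le
    -- minimum of normSq (g - W) on [0, t₀]
    have hsub2 : ∀ u : ℝ, u ∈ Icc (0:ℝ) t₀ → ENNReal.ofReal u < τ :=
      fun u hu => hdown ht₀dom hu.2
    have hgc : ContinuousOn g (Icc 0 t₀) := fun u hu =>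
      ((hode u hu.1 (hsub2 u hu)).2.continuousWithinAt).mono (fun x hx => hx.1)
    have hWc : ContinuousOn W (Icc 0 t₀) := hW.mono (fun x hx => hx.1)
    have hEc : ContinuousOn (fun u => Complex.normSq (g u - W u)) (Icc 0 t₀) :=
      Complex.continuous_normSq.comp_continuousOn (hgc.sub hWc)
    obtain ⟨m, hmI, hmmin⟩ :=
      isCompact_Icc.exists_isMinOn ⟨0, left_mem_Icc.2 ht₀Icc.1⟩ hEc
    have hdminpos : 0 < Complex.normSq (g m - W m) :=
      Complex.normSq_pos.2 (sub_ne_zero.2 (hode m hmI.1 (hsub2 m hmI)).1)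
    set K := 2 / Complex.normSq (g m - W m) with hK
    set f : ℝ → ℝ := fun s => 1 - Complex.normSq (g (t₀ - s)) with hf
    have hmaps : ∀ s ∈ Icc (0:ℝ) t₀, t₀ - s ∈ Icc (0:ℝ) t₀ := by
      intro s hs; exact ⟨by linarith [hs.2], by linarith [hs.1]⟩
    have hfc : ContinuousOn f (Icc 0 t₀) := by
      apply continuousOn_const.sub
      exact (Complex.continuous_normSq.comp_continuousOn hgc).comp
        ((continuous_const.sub continuous_id).continuousOn) hmaps
    have hfd : ∀ x ∈ Ico (0:ℝ) t₀,
        HasDerivWithinAt f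
          (2 * Complex.normSq (g (t₀ - x)) * (1 - Complex.normSq (g (t₀ - x))) /
            Complex.normSq (g (t₀ - x) - W (t₀ - x))) (Ici x) x := by
      intro x hx
      have hux : 0 < t₀ - x := by linarith [hx.2]
      have hudom : ENNReal.ofReal (t₀ - x) < τ := hdown ht₀dom (by linarith [hx.1])
      have h1 := (hderiv (t₀ - x) hux.le hudom).hasDerivAt (Ici_mem_nhds hux)
      have h2 : HasDerivAt (fun s : ℝ => t₀ - s) (-1) x := by
        simpa using (hasDerivAt_id x).const_sub t₀
      have h3 := (h1.comp x h2).const_sub 1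
      have : HasDerivAt f
          (2 * Complex.normSq (g (t₀ - x)) * (1 - Complex.normSq (g (t₀ - x))) /
            Complex.normSq (g (t₀ - x) - W (t₀ - x))) x := by
        convert h3 using 1
        rotate_left 3
        ring
        all_goals rfl
      exact this.hasDerivWithinAt
    have hbound : ∀ x ∈ Ico (0:ℝ) t₀,
        ‖2 * Complex.normSq (g (t₀ - x)) * (1 - Complex.normSq (g (t₀ - x))) /
            Complex.normSq (g (t₀ - x) - W (t₀ - x))‖ ≤ K * ‖f x‖ + 0 := by
      intro x hx
      have hux0 : 0 < t₀ - x := by linarith [hx.2]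
      have huIcc : t₀ - x ∈ Icc (0:ℝ) t₀ := ⟨hux0.le, by linarith [hx.1]⟩
      have hr_le1 : Complex.normSq (g (t₀ - x)) ≤ 1 := hle1 _ hux0.le huIcc.2
      have hr_nn : 0 ≤ Complex.normSq (g (t₀ - x)) := Complex.normSq_nonneg _
      have hE_ge : Complex.normSq (g m - W m) ≤ Complex.normSq (g (t₀ - x) - W (t₀ - x)) :=
        hmmin huIcc
      have hEpos : 0 < Complex.normSq (g (t₀ - x) - W (t₀ - x)) :=
        lt_of_lt_of_le hdminpos hE_ge
      have hnum_nn : 0 ≤ 2 * Complex.normSq (g (t₀ - x)) * (1 - Complex.normSq (g (t₀ - x))) :=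
        mul_nonneg (by linarith) (by linarith)
      have hfx : f x = 1 - Complex.normSq (g (t₀ - x)) := rfl
      rw [Real.norm_eq_abs, Real.norm_eq_abs, abs_of_nonneg (div_nonneg hnum_nn hEpos.le),
        hfx, abs_of_nonneg (by linarith), add_zero, hK]
      rw [div_mul_eq_mul_div, div_le_div_iff₀ hEpos hdminpos]
      nlinarith [mul_nonneg (sub_nonneg.2 hr_le1) (sub_nonneg.2 hE_ge),
        mul_nonneg (mul_nonneg (sub_nonneg.2 hr_le1) (sub_nonneg.2 hr_le1)) hdminpos.le]
    have hG := norm_le_gronwallBound_of_norm_deriv_right_le (δ := 0) (K := K) (ε := 0)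
      hfc hfd (by simp [hf, ht₀eq]) hbound t₀ (right_mem_Icc.2 ht₀Icc.1)
    rw [gronwallBound_ε0_δ0] at hG
    have hf0 : f t₀ = 1 - Complex.normSq (g 0) := by simp [hf]
    rw [Real.norm_eq_abs] at hG
    have := abs_nonneg (f t₀)
    have hfeq : f t₀ = 0 := by
      have := le_antisymm hG (abs_nonneg (f t₀))
      exact abs_eq_zero.1 this
    rw [hf0] at hfeq
    linarith
  -- convexity and monotonicity machinery
  set S : Set ℝ := {t : ℝ | 0 ≤ t ∧ ENNReal.ofReal t < τ} with hSdef
  have hSconv : Convex ℝ S := by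
    apply Set.OrdConnected.convex
    constructor
    intro x hx y hy u hu
    exact ⟨le_trans hx.1 hu.1, lt_of_le_of_lt (ENNReal.ofReal_le_ofReal hu.2) hy.2⟩
  have hrcS : ContinuousOn (fun s => Complex.normSq (g s)) S :=
    fun t ht => (hcontW t ht.1 ht.2).mono (fun x hx => hx.1)
  have hintS : ∀ x ∈ interior S, 0 < x ∧ x ∈ S := by
    intro x hx
    have h1 : x ∈ S := interior_subset hx
    have h2 : x ∈ interior (Ici (0:ℝ)) := interior_mono (fun u hu => hu.1) hx
    rw [interior_Ici] at h2
    exact ⟨h2, h1⟩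
  have hderivAt : ∀ x ∈ interior S,
      HasDerivAt (fun s => Complex.normSq (g s))
        (2 * Complex.normSq (g x) * (1 - Complex.normSq (g x)) /
          Complex.normSq (g x - W x)) x := by
    intro x hx
    obtain ⟨hx0, hxS⟩ := hintS x hx
    exact (hderiv x hxS.1 hxS.2).hasDerivAt (Ici_mem_nhds hx0)
  have hmono : MonotoneOn (fun s => Complex.normSq (g s)) S := by
    apply monotoneOn_of_deriv_nonneg hSconv hrcS
    · exact fun x hx => (hderivAt x hx).differentiableAt.differentiableWithinAt
    · intro x hx
      rw [(hderivAt x hx).deriv]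
      obtain ⟨hx0, hxS⟩ := hintS x hx
      have h1 := hlt x hxS.1 hxS.2
      have h2 := Complex.normSq_nonneg (g x)
      have h3 := Complex.normSq_nonneg (g x - W x)
      apply div_nonneg _ h3
      nlinarith
  have hposS : ∀ t ∈ S, 0 < Complex.normSq (g t) := by
    intro t ht
    have h0S : (0:ℝ) ∈ S := ⟨le_refl 0, by
      calc ENNReal.ofReal 0 ≤ ENNReal.ofReal t := ENNReal.ofReal_le_ofReal ht.1
        _ < τ := ht.2⟩
    exact lt_of_lt_of_le hr0pos (hmono h0S ht ht.1)
  have hpos' : ∀ t ∈ S,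
      0 < 2 * Complex.normSq (g t) * (1 - Complex.normSq (g t)) /
          Complex.normSq (g t - W t) := by
    intro t ht
    have h1 := hlt t ht.1 ht.2
    have h2 := hposS t ht
    have h3 : 0 < Complex.normSq (g t - W t) :=
      Complex.normSq_pos.2 (sub_ne_zero.2 (hode t ht.1 ht.2).1)
    apply div_pos _ h3
    nlinarith
  have hstrict : StrictMonoOn (fun s => Complex.normSq (g s)) S := by
    apply strictMonoOn_of_deriv_pos hSconv hrcS
    intro x hx
    rw [(hderivAt x hx).deriv]
    exact hpos' x (hintS x hx).2
  constructor
  · intro t ht hτ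
    have htS : t ∈ S := ⟨ht, hτ⟩
    refine ⟨?_, ?_, ?_⟩
    · have h1 := hlt t ht hτ
      rw [← Complex.sq_norm] at h1
      nlinarith [norm_nonneg (g t)]
    · simp only [Complex.sq_norm]
      exact hderiv t ht hτ
    · simp only [Complex.sq_norm]
      exact hpos' t htS
  · intro s hs t ht hst
    have := hstrict hs ht hst
    simp only [Complex.norm_def]
    exact Real.sqrt_lt_sqrt (Complex.normSq_nonneg _) this
end

section
/- Let W : [0,T] → ℂ be continuous with |W_t| = 1 for all t, and let g : [0,T] → ℂ \ {0} be differentiable with ∂_t g(t) = −g(t)(g(t) + W_t)/(g(t) − W_t) and g(t) ≠ W_t for all t. Then the Schwarz reflection h(t) = 1/conj(g(t)) also satisfies ∂_t h(t) = −h(t)(h(t) + W_t)/(h(t) − W_t). -/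
open Set Filter Topology

/-- If `g` solves the radial Loewner equation `∂ₜ g = -g (g + W)/(g - W)` with
unit-circle-valued driving term `W` and `g(t) ∉ {0, W_t}`, then its Schwarz
reflection `h(t) = 1/conj(g(t))` solves the same equation. -/
theorem radial_loewner_schwarz_reflection
    (W : ℝ → ℂ) (hW : Continuous W)
    (hW1 : ∀ t : ℝ, ‖W t‖ = 1)
    (g : ℝ → ℂ)
    (hg0 : ∀ t : ℝ, g t ≠ 0)
    (hgW : ∀ t : ℝ, g t ≠ W t)
    (hode : ∀ t : ℝ, HasDerivAt g (-g t * (g t + W t) / (g t - W t)) t) :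
    ∀ t : ℝ,
      HasDerivAt (fun s => ((starRingEnd ℂ) (g s))⁻¹)
        (-((starRingEnd ℂ) (g t))⁻¹ *
            (((starRingEnd ℂ) (g t))⁻¹ + W t) /
          (((starRingEnd ℂ) (g t))⁻¹ - W t)) t := by
  intro t
  have hW0 : W t ≠ 0 := by
    intro h
    have := hW1 t
    rw [h] at this
    simp at this
  have hWc : (starRingEnd ℂ) (W t) = (W t)⁻¹ := (Complex.inv_eq_conj (hW1 t)).symm
  have hu : (starRingEnd ℂ) (g t) ≠ 0 := by simpa using hg0 t
  have hsub : g t - W t ≠ 0 := sub_ne_zero.mpr (hgW t)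
  have hsubc : (starRingEnd ℂ) (g t) - (W t)⁻¹ ≠ 0 := by
    rw [← hWc]
    intro h
    apply hsub
    have := congrArg (starRingEnd ℂ) h
    simpa [map_sub] using this
  have hconj : HasDerivAt (fun s => (starRingEnd ℂ) (g s))
      ((starRingEnd ℂ) (-g t * (g t + W t) / (g t - W t))) t := by
    exact (Complex.conjCLE.hasFDerivAt.comp_hasDerivAt t (hode t))
  have hinv : HasDerivAt (fun s => ((starRingEnd ℂ) (g s))⁻¹)
      (-(((starRingEnd ℂ) (g t)) ^ 2)⁻¹ *
        (starRingEnd ℂ) (-g t * (g t + W t) / (g t - W t))) t := by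
    have := (hasDerivAt_inv hu).scomp t hconj
    rw [smul_eq_mul, mul_comm] at this
    exact this
  convert hinv using 1
  rw [map_div₀, map_sub, map_mul, map_add, map_neg, hWc]
  have h1 : ((starRingEnd ℂ) (g t))⁻¹ - W t ≠ 0 := by
    intro h
    apply hsubc
    have h2 : ((starRingEnd ℂ) (g t))⁻¹ = W t := sub_eq_zero.mp h
    rw [inv_eq_iff_eq_inv] at h2
    rw [h2, sub_self]
  rw [← mul_div_assoc, div_eq_div_iff h1 hsubc]
  field_simp
  ring
end

section
/- Let λ ∈ ℂ with |λ| = 1, let z₀ = x + iy with y > 0, let φ(z) = λ (z − z₀)/(z − conj(z₀)), let W ∈ ℝ, and set Ŵ = φ(W). Then for every v ∈ ℂ with v ≠ W and v ≠ conj(z₀): i |z₀ − W|² / ( y (W − v) ) = Ŵ⁻¹ Ψ_𝔻(φ(v), Ŵ) − Ŵ⁻¹ Ψ_𝔻(λ, Ŵ), where Ψ_𝔻(w,z) = −z(z+w)/(z−w). -/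
set_option maxHeartbeats 1000000


open Complex

/-- The radial Loewner vector field `Ψ_𝔻(w, z) = -z (z + w)/(z - w)`. -/
noncomputable def PsiD (w z : ℂ) : ℂ := -z * (z + w) / (z - w)

/-- Pushing the (time-rescaled) chordal Loewner vector field forward by the Möbius
map `φ(z) = λ (z - z₀)/(z - conj z₀)`: for `W ∈ ℝ`, `Ŵ = φ(W)` and `v ∉ {W, conj z₀}`,
`i |z₀ - W|²/(y (W - v)) = Ŵ⁻¹ Ψ_𝔻(φ(v), Ŵ) - Ŵ⁻¹ Ψ_𝔻(λ, Ŵ)`. -/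
theorem chordal_field_pushforward_radial
    (lam : ℂ) (hlam : ‖lam‖ = 1)
    (z₀ : ℂ) (hz₀ : 0 < z₀.im)
    (W : ℝ) (v : ℂ) (hv1 : v ≠ (W : ℂ)) (hv2 : v ≠ (starRingEnd ℂ) z₀) :
    Complex.I * (‖z₀ - (W : ℂ)‖ ^ 2 : ℝ) /
        ((z₀.im : ℂ) * ((W : ℂ) - v)) =
      (lam * ((W : ℂ) - z₀) / ((W : ℂ) - (starRingEnd ℂ) z₀))⁻¹ *
          PsiD (lam * (v - z₀) / (v - (starRingEnd ℂ) z₀))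
            (lam * ((W : ℂ) - z₀) / ((W : ℂ) - (starRingEnd ℂ) z₀)) -
        (lam * ((W : ℂ) - z₀) / ((W : ℂ) - (starRingEnd ℂ) z₀))⁻¹ *
          PsiD lam
            (lam * ((W : ℂ) - z₀) / ((W : ℂ) - (starRingEnd ℂ) z₀)) := by
  set c := (starRingEnd ℂ) z₀ with hc
  set y := (z₀.im : ℂ) with hy'
  have hy : y ≠ 0 := by
    simp only [hy', ne_eq, Complex.ofReal_eq_zero]
    exact hz₀.ne'
  have hzc : z₀ - c = 2 * y * I := by
    rw [hc, hy']; exact_mod_cast Complex.sub_conj z₀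
  have hzc0 : z₀ - c ≠ 0 := by
    rw [hzc]
    exact mul_ne_zero (mul_ne_zero two_ne_zero hy) I_ne_zero
  have hcz0 : c - z₀ ≠ 0 := fun h => hzc0 (by linear_combination -h)
  have habs : ((‖z₀ - (W : ℂ)‖ ^ 2 : ℝ) : ℂ) = (z₀ - W) * (c - W) := by
    rw [Complex.sq_norm, ← Complex.mul_conj]
    simp [hc, map_sub]
  have hWz : (W : ℂ) - z₀ ≠ 0 := by
    intro h
    have := congrArg Complex.im h
    simp at this
    exact hz₀.ne' this
  have hWc : (W : ℂ) - c ≠ 0 := by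
    intro h
    have := congrArg Complex.im h
    simp [hc] at this
    exact hz₀.ne' this
  have hvc : v - c ≠ 0 := sub_ne_zero.mpr hv2
  have hWv : (W : ℂ) - v ≠ 0 := sub_ne_zero.mpr (Ne.symm hv1)
  have hlam0 : lam ≠ 0 := by
    intro h; rw [h] at hlam; simp at hlam
  have hW0 : lam * ((W : ℂ) - z₀) / ((W : ℂ) - c) ≠ 0 :=
    div_ne_zero (mul_ne_zero hlam0 hWz) hWc
  have hden2 : lam * ((W : ℂ) - z₀) / ((W : ℂ) - c) - lam ≠ 0 := by
    rw [div_sub' hWc]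
    apply div_ne_zero _ hWc
    have h1 : lam * ((W : ℂ) - z₀) - lam * ((W : ℂ) - c) = -(lam * (z₀ - c)) := by ring
    intro h
    apply hlam0
    have h2 : lam * (z₀ - c) = 0 := by linear_combination -h - h1
    rcases mul_eq_zero.mp h2 with h3 | h3
    · exact h3
    · exact absurd h3 hzc0
  have hden1 : lam * ((W : ℂ) - z₀) / ((W : ℂ) - c) - lam * (v - z₀) / (v - c) ≠ 0 := by
    rw [div_sub_div _ _ hWc hvc]
    apply div_ne_zero _ (mul_ne_zero hWc hvc)
    intro h
    have h2 : lam * ((z₀ - c) * ((W : ℂ) - v)) = 0 := by linear_combination h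
    rcases mul_eq_zero.mp h2 with h3 | h3
    · exact hlam0 h3
    · rcases mul_eq_zero.mp h3 with h4 | h4
      · exact hzc0 h4
      · exact hWv h4
  have key : ∀ w : ℂ, lam * ((W : ℂ) - z₀) / ((W : ℂ) - c) - w ≠ 0 →
      (lam * ((W : ℂ) - z₀) / ((W : ℂ) - c))⁻¹ *
          PsiD w (lam * ((W : ℂ) - z₀) / ((W : ℂ) - c)) =
      -((lam * ((W : ℂ) - z₀) / ((W : ℂ) - c) + w) /
          (lam * ((W : ℂ) - z₀) / ((W : ℂ) - c) - w)) := by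
    intro w hw
    unfold PsiD
    rw [show -(lam * ((W : ℂ) - z₀) / ((W : ℂ) - c)) * (lam * ((W : ℂ) - z₀) / ((W : ℂ) - c) + w) /
          (lam * ((W : ℂ) - z₀) / ((W : ℂ) - c) - w) =
        lam * ((W : ℂ) - z₀) / ((W : ℂ) - c) *
          -((lam * ((W : ℂ) - z₀) / ((W : ℂ) - c) + w) /
            (lam * ((W : ℂ) - z₀) / ((W : ℂ) - c) - w)) from by ring,
      inv_mul_cancel_left₀ hW0]
  rw [key _ hden1, key _ hden2]
  have e1 : (lam * ((W : ℂ) - z₀) / ((W : ℂ) - c) + lam * (v - z₀) / (v - c)) /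
        (lam * ((W : ℂ) - z₀) / ((W : ℂ) - c) - lam * (v - z₀) / (v - c)) =
      (((W : ℂ) - z₀) * (v - c) + (v - z₀) * ((W : ℂ) - c)) / ((z₀ - c) * ((W : ℂ) - v)) := by
    rw [div_eq_div_iff hden1 (mul_ne_zero hzc0 hWv)]
    field_simp
    ring
  have e2 : (lam * ((W : ℂ) - z₀) / ((W : ℂ) - c) + lam) /
        (lam * ((W : ℂ) - z₀) / ((W : ℂ) - c) - lam) =
      (2 * (W : ℂ) - z₀ - c) / (c - z₀) := by
    rw [div_eq_div_iff hden2 hcz0]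
    field_simp
    ring
  rw [e1, e2, habs]
  have hIy : I / y = -2 / (z₀ - c) := by
    rw [div_eq_div_iff hy hzc0, hzc]
    linear_combination 2 * y * Complex.I_sq
  have hL : I * ((z₀ - (W : ℂ)) * (c - (W : ℂ))) / (y * ((W : ℂ) - v)) =
      I / y * ((z₀ - (W : ℂ)) * (c - (W : ℂ)) / ((W : ℂ) - v)) :=
    mul_div_mul_comm I ((z₀ - (W : ℂ)) * (c - (W : ℂ))) y ((W : ℂ) - v)
  rw [hL, hIy]
  field_simp
  ring
end

section
/- Let W : [0,∞) → ℂ be continuous with |W_t| = 1 for all t, and for z in the open unit disk 𝔻 let g_t(z) denote the maximal solution of the radial Loewner equation ∂_t g_t(z) = −g_t(z)(g_t(z) + W_t)/(g_t(z) − W_t), g_0(z) = z, with lifetime τ_z. For each t ≥ 0 the set H_t = {z ∈ 𝔻 : τ_z > t} is open, and the map z ↦ g_t(z) is holomorphic and injective on H_t, with g_t(H_t) ⊆ 𝔻. -/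
open Set Filter Topology MeasureTheory intervalIntegral
open scoped ENNReal NNReal

open Set Filter Topology
open scoped ENNReal

noncomputable def rlF (ω w : ℂ) : ℂ := -w * (w + ω) / (w - ω)

lemma rlF_eq (ω w : ℂ) (h : w ≠ ω) : rlF ω w = -w - 2*ω - 2*ω^2/(w - ω) := by
  have hd : w - ω ≠ 0 := sub_ne_zero.mpr h
  unfold rlF
  field_simp
  ring

lemma rlF_sub (ω w₁ w₂ : ℂ) (h1 : w₁ ≠ ω) (h2 : w₂ ≠ ω) :
    rlF ω w₁ - rlF ω w₂ = -(w₁ - w₂) + 2*ω^2*(w₁ - w₂)/((w₁ - ω)*(w₂ - ω)) := by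
  have hd1 : w₁ - ω ≠ 0 := sub_ne_zero.mpr h1
  have hd2 : w₂ - ω ≠ 0 := sub_ne_zero.mpr h2
  rw [rlF_eq ω w₁ h1, rlF_eq ω w₂ h2]
  field_simp
  ring

lemma rlF_taylor (ω w γ : ℂ) (h1 : w ≠ ω) (h2 : γ ≠ ω) :
    rlF ω w - rlF ω γ - (-1 + 2*ω^2/(γ-ω)^2) * (w - γ)
      = -2*ω^2*(w-γ)^2/((w-ω)*(γ-ω)^2) := by
  have hd1 : w - ω ≠ 0 := sub_ne_zero.mpr h1
  have hd2 : γ - ω ≠ 0 := sub_ne_zero.mpr h2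
  rw [rlF_eq ω w h1, rlF_eq ω γ h2]
  field_simp
  ring

lemma rlF_lip {ω w₁ w₂ : ℂ} {ε : ℝ} (hω : ‖ω‖ = 1) (hε : 0 < ε)
    (e1 : ε ≤ ‖w₁ - ω‖) (e2 : ε ≤ ‖w₂ - ω‖) :
    ‖rlF ω w₁ - rlF ω w₂‖ ≤ (1 + 2/ε^2) * ‖w₁ - w₂‖ := by
  have h1 : w₁ ≠ ω := by
    intro h; rw [h, sub_self, norm_zero] at e1; linarith
  have h2 : w₂ ≠ ω := by
    intro h; rw [h, sub_self, norm_zero] at e2; linarith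
  rw [rlF_sub ω w₁ w₂ h1 h2]
  have hεε : ε^2 ≤ ‖w₁ - ω‖ * ‖w₂ - ω‖ := by
    have := mul_le_mul e1 e2 hε.le (le_trans hε.le e1)
    nlinarith
  have hpos : (0:ℝ) < ‖(w₁ - ω)*(w₂ - ω)‖ := by
    rw [norm_mul]
    have p1 : (0:ℝ) < ‖w₁ - ω‖ := lt_of_lt_of_le hε e1
    have p2 : (0:ℝ) < ‖w₂ - ω‖ := lt_of_lt_of_le hε e2
    positivity
  have h2' : (0:ℝ) ≤ 2/ε^2 * ‖w₁ - w₂‖ := by positivity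
  have hb : ‖2*ω^2*(w₁ - w₂)/((w₁ - ω)*(w₂ - ω))‖ ≤ 2/ε^2 * ‖w₁ - w₂‖ := by
    rw [norm_div, div_le_iff₀ hpos]
    have hnum : ‖2*ω^2*(w₁ - w₂)‖ = 2 * ‖w₁ - w₂‖ := by
      rw [norm_mul, norm_mul, norm_pow, hω]; norm_num
    rw [hnum, norm_mul]
    have h22 : 2/ε^2 * ε^2 = 2 := div_mul_cancel₀ 2 (by positivity)
    have heq : 2/ε^2 * ‖w₁ - w₂‖ * ε^2 = 2 * ‖w₁ - w₂‖ := by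
      rw [mul_right_comm, h22]
    have hk := mul_le_mul_of_nonneg_left hεε h2'
    linarith
  calc ‖-(w₁ - w₂) + 2*ω^2*(w₁ - w₂)/((w₁ - ω)*(w₂ - ω))‖
      ≤ ‖-(w₁ - w₂)‖ + ‖2*ω^2*(w₁ - w₂)/((w₁ - ω)*(w₂ - ω))‖ := norm_add_le _ _
    _ ≤ ‖w₁ - w₂‖ + 2/ε^2 * ‖w₁ - w₂‖ := by rw [norm_neg]; linarith
    _ = (1 + 2/ε^2) * ‖w₁ - w₂‖ := by ring

lemma rlF_taylor_bound {ω w γ : ℂ} {ε R : ℝ} (hω : ‖ω‖ = 1) (hε : 0 < ε)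
    (e1 : ε ≤ ‖w - ω‖) (e2 : ε ≤ ‖γ - ω‖) (hR : ‖w - γ‖ ≤ R) :
    ‖rlF ω w - rlF ω γ - (-1 + 2*ω^2/(γ-ω)^2) * (w - γ)‖ ≤ 2/ε^3 * (R * ‖w - γ‖) := by
  have h1 : w ≠ ω := by
    intro h; rw [h, sub_self, norm_zero] at e1; linarith
  have h2 : γ ≠ ω := by
    intro h; rw [h, sub_self, norm_zero] at e2; linarith
  rw [rlF_taylor ω w γ h1 h2]
  have hpos : (0:ℝ) < ‖(w - ω)*(γ - ω)^2‖ := by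
    rw [norm_mul, norm_pow]
    have p1 : (0:ℝ) < ‖w - ω‖ := lt_of_lt_of_le hε e1
    have p2 : (0:ℝ) < ‖γ - ω‖ := lt_of_lt_of_le hε e2
    positivity
  rw [norm_div, div_le_iff₀ hpos]
  have hnum : ‖-2*ω^2*(w-γ)^2‖ = 2 * ‖w - γ‖^2 := by
    rw [norm_mul, norm_mul, norm_pow, norm_pow, hω, norm_neg]; norm_num
  rw [hnum, norm_mul, norm_pow]
  have hε3 : ε^3 ≤ ‖w - ω‖ * ‖γ - ω‖^2 := by
    have h22 : ε^2 ≤ ‖γ - ω‖^2 := by nlinarith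
    have := mul_le_mul e1 h22 (by positivity) (le_trans hε.le e1)
    nlinarith
  have hrn : (0:ℝ) ≤ ‖w - γ‖ := norm_nonneg _
  have h33 : 2/ε^3 * ε^3 = 2 := div_mul_cancel₀ 2 (by positivity)
  have key : 2/ε^3 * (R * ‖w - γ‖) * (ε^3) ≤ 2/ε^3 * (R * ‖w - γ‖) * (‖w - ω‖ * ‖γ - ω‖^2) := by
    apply mul_le_mul_of_nonneg_left hε3
    have hR0 : (0:ℝ) ≤ R := le_trans hrn hR
    positivity
  have heq : 2/ε^3 * (R * ‖w - γ‖) * ε^3 = 2 * (R * ‖w - γ‖) := by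
    rw [mul_right_comm, h33]
  have hfin : ‖w - γ‖ * ‖w - γ‖ ≤ R * ‖w - γ‖ := mul_le_mul_of_nonneg_right hR hrn
  nlinarith [key]

lemma rlF_re (ω γ : ℂ) (h : γ ≠ ω) (hω : Complex.normSq ω = 1) :
    ((starRingEnd ℂ) γ * rlF ω γ).re
      = Complex.normSq γ * (1 - Complex.normSq γ) / Complex.normSq (γ - ω) := by
  have hd : γ - ω ≠ 0 := sub_ne_zero.mpr h
  have hdc : (starRingEnd ℂ) (γ - ω) ≠ 0 := by
    simp only [ne_eq, map_eq_zero]; exact hd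
  have step1 : (starRingEnd ℂ) γ * rlF ω γ
      = -(γ * (starRingEnd ℂ) γ) * ((γ + ω) * (starRingEnd ℂ) (γ - ω))
        / ((γ - ω) * (starRingEnd ℂ) (γ - ω)) := by
    set c := (starRingEnd ℂ) γ with hc
    set e := (starRingEnd ℂ) (γ - ω) with he
    have he0 : e ≠ 0 := hdc
    rw [rlF]
    field_simp
  rw [step1, Complex.mul_conj, Complex.mul_conj]
  have hre : ((γ + ω) * (starRingEnd ℂ) (γ - ω)).re
      = Complex.normSq γ - Complex.normSq ω := by
    simp [Complex.mul_re, Complex.sub_re, Complex.sub_im, Complex.add_re, Complex.add_im,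
      Complex.conj_re, Complex.conj_im, Complex.normSq_apply]
    ring
  have : (-(Complex.normSq γ : ℂ) * ((γ + ω) * (starRingEnd ℂ) (γ - ω))
      / (Complex.normSq (γ - ω) : ℂ)).re
      = -Complex.normSq γ * ((γ + ω) * (starRingEnd ℂ) (γ - ω)).re
        / Complex.normSq (γ - ω) := by
    rw [div_eq_mul_inv, ← Complex.ofReal_inv, ← Complex.ofReal_neg]
    rw [mul_comm ((Complex.ofReal (-Complex.normSq γ))) _, mul_assoc, ← Complex.ofReal_mul]
    rw [Complex.mul_re, Complex.ofReal_re, Complex.ofReal_im]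
    simp
    ring
  rw [this, hre, hω]
  have hd2 : Complex.normSq (γ - ω) ≠ 0 := by simpa [Complex.normSq_eq_zero, sub_eq_zero] using h
  field_simp
  ring



section Traj

variable {W : ℝ → ℂ} {g : ℝ → ℂ → ℂ} {τ : ℂ → ℝ≥0∞}

/-- Basic facts about a single trajectory on `[0, t]`. -/
lemma traj_facts
    (hode : ∀ z : ℂ, ‖z‖ < 1 → ∀ t : ℝ, 0 ≤ t → ENNReal.ofReal t < τ z →
      g t z ≠ W t ∧
        HasDerivWithinAt (fun s => g s z)
          (-g t z * (g t z + W t) / (g t z - W t)) (Set.Ici (0 : ℝ)) t)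
    {z : ℂ} {t : ℝ} (hz : ‖z‖ < 1) (ht : 0 ≤ t) (hτ : ENNReal.ofReal t < τ z) :
    (∀ s ∈ Icc 0 t, g s z ≠ W s) ∧
    (∀ s ∈ Icc 0 t, HasDerivWithinAt (fun u => g u z) (rlF (W s) (g s z)) (Set.Ici (0:ℝ)) s) ∧
    ContinuousOn (fun s => g s z) (Icc 0 t) ∧
    (∀ s ∈ Ico 0 t, HasDerivWithinAt (fun u => g u z) (rlF (W s) (g s z)) (Set.Ici s) s) := by
  have key : ∀ s ∈ Icc (0:ℝ) t, g s z ≠ W s ∧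
      HasDerivWithinAt (fun u => g u z) (rlF (W s) (g s z)) (Set.Ici (0:ℝ)) s := by
    intro s hs
    have hτs : ENNReal.ofReal s < τ z :=
      lt_of_le_of_lt (ENNReal.ofReal_le_ofReal hs.2) hτ
    exact hode z hz s hs.1 hτs
  refine ⟨fun s hs => (key s hs).1, fun s hs => (key s hs).2, ?_, ?_⟩
  · intro s hs
    exact ((key s hs).2.continuousWithinAt).mono (fun u hu => hu.1)
  · intro s hs
    exact ((key s ⟨hs.1, hs.2.le⟩).2).mono (fun u (hu : s ≤ u) => le_trans hs.1 hu)

set_option maxHeartbeats 1000000 in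
/-- The tube lemma: trajectories of nearby initial points survive past `t`,
stay close to the reference trajectory, and stay away from the driving point. -/
lemma tube
    (hW : ContinuousOn W (Set.Ici (0 : ℝ)))
    (hW1 : ∀ t : ℝ, 0 ≤ t → ‖W t‖ = 1)
    (hτpos : ∀ z : ℂ, ‖z‖ < 1 → 0 < τ z)
    (hg0 : ∀ z : ℂ, ‖z‖ < 1 → g 0 z = z)
    (hode : ∀ z : ℂ, ‖z‖ < 1 → ∀ t : ℝ, 0 ≤ t → ENNReal.ofReal t < τ z →
      g t z ≠ W t ∧
        HasDerivWithinAt (fun s => g s z)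
          (-g t z * (g t z + W t) / (g t z - W t)) (Set.Ici (0 : ℝ)) t)
    (hmax : ∀ z : ℂ, ‖z‖ < 1 → τ z ≠ ⊤ →
      Tendsto (fun t : ℝ => g t z - W t) (𝓝[<] (τ z).toReal) (𝓝 0))
    {z₀ : ℂ} {t : ℝ} (ht : 0 ≤ t) (hz₀ : ‖z₀‖ < 1)
    (hτ : ENNReal.ofReal t < τ z₀) :
    ∃ r > 0, ∃ L : ℝ, 0 ≤ L ∧ ∃ ε > 0,
      (∀ s ∈ Icc 0 t, ε ≤ ‖g s z₀ - W s‖) ∧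
      ∀ z₁ : ℂ, ‖z₁ - z₀‖ < r →
        ‖z₁‖ < 1 ∧ ENNReal.ofReal t < τ z₁ ∧
        ∀ s ∈ Icc 0 t, ‖g s z₁ - g s z₀‖ ≤ ‖z₁ - z₀‖ * Real.exp (L * s) ∧
          ε ≤ ‖g s z₁ - W s‖ := by
  obtain ⟨hne₀, hder₀, hcont₀, hder₀'⟩ := traj_facts hode hz₀ ht hτ
  have hIcc_ne : (Icc (0:ℝ) t).Nonempty := nonempty_Icc.2 ht
  have hWc : ContinuousOn W (Icc 0 t) := hW.mono (fun u hu => hu.1)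
  -- minimum distance to the driving function
  have hDc : ContinuousOn (fun s => ‖g s z₀ - W s‖) (Icc 0 t) := (hcont₀.sub hWc).norm
  obtain ⟨s₁, hs₁, hmin⟩ := isCompact_Icc.exists_isMinOn hIcc_ne hDc
  set ρ : ℝ := ‖g s₁ z₀ - W s₁‖ with hρdef
  have hρpos : 0 < ρ := by
    rw [hρdef, norm_pos_iff, sub_ne_zero]
    exact hne₀ s₁ hs₁
  have hρle : ∀ s ∈ Icc 0 t, ρ ≤ ‖g s z₀ - W s‖ := fun s hs => hmin hs
  -- maximum of the trajectory norm
  obtain ⟨s₂, hs₂, hmaxM⟩ := isCompact_Icc.exists_isMaxOn hIcc_ne hcont₀.norm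
  set M : ℝ := ‖g s₂ z₀‖ with hMdef
  have hMle : ∀ s ∈ Icc 0 t, ‖g s z₀‖ ≤ M := fun s hs => hmaxM hs
  -- constants
  set ε : ℝ := ρ / 2 with hεdef
  have hεpos : 0 < ε := by positivity
  set R : ℝ := M + ρ / 2 with hRdef
  set L : ℝ := 1 + 2 / ε ^ 2 with hLdef
  have hLpos : 0 < L := by positivity
  set K : ℝ≥0 := L.toNNReal with hKdef
  have hKL : (K : ℝ) = L := Real.coe_toNNReal L hLpos.le
  -- the "good" time-dependent set
  set good : ℝ → Set ℂ := fun u =>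
    if u ∈ Icc (0:ℝ) t then {w | ε ≤ ‖w - W u‖ ∧ ‖w‖ ≤ R} else ∅ with hgooddef
  have hlip : ∀ u, LipschitzOnWith K (fun w => rlF (W u) w) (good u) := by
    intro u
    by_cases hu : u ∈ Icc (0:ℝ) t
    · rw [lipschitzOnWith_iff_dist_le_mul]
      intro x hx y hy
      rw [hgooddef] at hx hy
      simp only [if_pos hu, mem_setOf_eq] at hx hy
      rw [dist_eq_norm, dist_eq_norm, hKL]
      have hWu : ‖W u‖ = 1 := by
        exact hW1 u hu.1
      exact rlF_lip hWu hεpos hx.1 hy.1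
    · rw [hgooddef]
      simp only [if_neg hu]
      exact lipschitzOnWith_empty _ _
  -- membership of the reference trajectory and of nearby points in the good set
  have hmem₀ : ∀ u ∈ Icc (0:ℝ) t, g u z₀ ∈ good u := by
    intro u hu
    rw [hgooddef]
    simp only [if_pos hu, mem_setOf_eq]
    constructor
    · calc ε ≤ ρ := by rw [hεdef]; linarith
        _ ≤ ‖g u z₀ - W u‖ := hρle u hu
    · calc ‖g u z₀‖ ≤ M := hMle u hu
        _ ≤ R := by rw [hRdef]; linarith
  have hmem₁ : ∀ (z₁ : ℂ) (u : ℝ), u ∈ Icc (0:ℝ) t → ‖g u z₁ - g u z₀‖ ≤ ρ/2 →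
      g u z₁ ∈ good u := by
    intro z₁ u hu hd
    rw [hgooddef]
    simp only [if_pos hu, mem_setOf_eq]
    constructor
    · have h1 : ρ ≤ ‖g u z₀ - W u‖ := hρle u hu
      have h2 : ‖g u z₀ - W u‖ ≤ ‖g u z₁ - W u‖ + ‖g u z₁ - g u z₀‖ := by
        have : g u z₀ - W u = (g u z₁ - W u) - (g u z₁ - g u z₀) := by ring
        rw [this]
        exact norm_sub_le _ _
      rw [hεdef]; linarith
    · have h2 : ‖g u z₁‖ - ‖g u z₀‖ ≤ ‖g u z₁ - g u z₀‖ := norm_sub_norm_le _ _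
      have := hMle u hu
      rw [hRdef]; linarith
  -- choice of r
  refine ⟨min (ρ/2 * Real.exp (-(L * t))) (1 - ‖z₀‖), ?_, L, hLpos.le, ε, hεpos,
    fun s hs => le_trans (by rw [hεdef]; linarith) (hρle s hs), ?_⟩
  · apply lt_min
    · positivity
    · linarith
  intro z₁ hz₁r
  have hd1 : ‖z₁ - z₀‖ < ρ/2 * Real.exp (-(L * t)) := lt_of_lt_of_le hz₁r (min_le_left _ _)
  have hd2 : ‖z₁ - z₀‖ < 1 - ‖z₀‖ := lt_of_lt_of_le hz₁r (min_le_right _ _)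
  have habs1 : ‖z₁‖ < 1 := by
    have : ‖z₁‖ ≤ ‖z₀‖ + ‖z₁ - z₀‖ := by
      calc ‖z₁‖ = ‖z₀ + (z₁ - z₀)‖ := by ring_nf
        _ ≤ ‖z₀‖ + ‖z₁ - z₀‖ := norm_add_le _ _
    linarith
  set d : ℝ := ‖z₁ - z₀‖ with hddef
  have hexp_le_one : Real.exp (-(L * t)) ≤ 1 := by
    rw [Real.exp_le_one_iff]
    nlinarith
  have hdδ : d < ρ/2 := by
    have := mul_le_of_le_one_right (by positivity : (0:ℝ) ≤ ρ/2) hexp_le_one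
    linarith
  have hkey : ∀ s', s' ≤ t → d * Real.exp (L * s') < ρ/2 := by
    intro s' hs'
    have h1 : Real.exp (L * s') ≤ Real.exp (L * t) :=
      Real.exp_le_exp.2 (mul_le_mul_of_nonneg_left hs' hLpos.le)
    have h2 : d * Real.exp (L * t) < ρ/2 := by
      have h3 := mul_lt_mul_of_pos_right hd1 (Real.exp_pos (L * t))
      rw [mul_assoc, ← Real.exp_add, neg_add_cancel, Real.exp_zero, mul_one] at h3
      exact h3
    calc d * Real.exp (L * s') ≤ d * Real.exp (L * t) :=
          mul_le_mul_of_nonneg_left h1 (norm_nonneg _)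
      _ < ρ/2 := h2
  -- the core bound
  have core : ∀ T, 0 ≤ T → T ≤ t → ENNReal.ofReal T < τ z₁ →
      ∀ s ∈ Icc 0 T, ‖g s z₁ - g s z₀‖ ≤ d * Real.exp (L * s) := by
    intro T hT0 hTt hTτ
    obtain ⟨hne₁, hder₁, hcont₁, hder₁'⟩ := traj_facts hode habs1 hT0 hTτ
    set D : ℝ → ℝ := fun s => ‖g s z₁ - g s z₀‖ with hDdef
    have hDc : ContinuousOn D (Icc 0 T) :=
      (hcont₁.sub (hcont₀.mono (Icc_subset_Icc le_rfl hTt))).norm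
    have gron : ∀ s₀ ∈ Icc (0:ℝ) T, (∀ u ∈ Ico (0:ℝ) s₀, D u ≤ ρ/2) →
        ∀ s ∈ Icc (0:ℝ) s₀, D s ≤ d * Real.exp (L * s) := by
      intro s₀ hs₀ hsmall s hs
      have key := dist_le_of_trajectories_ODE_of_mem (v := fun u w => rlF (W u) w)
        (s := good) (K := K) (fun u _ => hlip u)
        (f := fun u => g u z₁) (g := fun u => g u z₀) (a := 0) (b := s₀) (δ := d)
        (hcont₁.mono (Icc_subset_Icc le_rfl hs₀.2))
        (fun u hu => hder₁' u ⟨hu.1, lt_of_lt_of_le hu.2 hs₀.2⟩)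
        (fun u hu => hmem₁ z₁ u ⟨hu.1, le_trans hu.2.le (le_trans hs₀.2 hTt)⟩ (hsmall u hu))
        (hcont₀.mono (Icc_subset_Icc le_rfl (le_trans hs₀.2 hTt)))
        (fun u hu => hder₀' u ⟨hu.1, lt_of_lt_of_le hu.2 (le_trans hs₀.2 hTt)⟩)
        (fun u hu => hmem₀ u ⟨hu.1, le_trans hu.2.le (le_trans hs₀.2 hTt)⟩)
        (by show dist (g 0 z₁) (g 0 z₀) ≤ d
            rw [hg0 z₁ habs1, hg0 z₀ hz₀, dist_eq_norm])
      have := key s hs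
      rw [dist_eq_norm, sub_zero, hKL] at this
      exact this
    -- trap argument
    set bad : Set ℝ := {s ∈ Icc (0:ℝ) T | ρ/2 ≤ D s} with hbaddef
    rcases eq_empty_or_nonempty bad with hbe | hbne
    · -- no bad times: apply Grönwall on all of [0, T]
      have hall : ∀ u ∈ Ico (0:ℝ) T, D u ≤ ρ/2 := by
        intro u hu
        by_contra hcon
        push_neg at hcon
        have : u ∈ bad := ⟨⟨hu.1, hu.2.le⟩, hcon.le⟩
        rw [hbe] at this
        exact this
      exact gron T ⟨hT0, le_rfl⟩ hall
    · exfalso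
      have hbadsub : bad ⊆ Icc 0 T := fun u hu => hu.1
      have hbdd : BddBelow bad := (bddBelow_Icc : BddBelow (Icc (0:ℝ) T)).mono hbadsub
      have hbcl : IsClosed bad := by
        have : bad = Icc 0 T ∩ D ⁻¹' (Ici (ρ/2)) := by
          ext u; simp [hbaddef, and_comm]
        rw [this]
        exact hDc.preimage_isClosed_of_isClosed isClosed_Icc isClosed_Ici
      set sb : ℝ := sInf bad with hsbdef
      have hsbmem : sb ∈ bad := hbcl.csInf_mem hbne hbdd
      have hD0 : D 0 = d := by
        rw [hDdef]
        simp only [hg0 z₁ habs1, hg0 z₀ hz₀]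
        exact hddef.symm
      have hsbpos : 0 < sb := by
        rcases lt_or_eq_of_le hsbmem.1.1 with h | h
        · exact h
        · exfalso
          have := hsbmem.2
          rw [← h, hD0] at this
          linarith
      have hsmall : ∀ u ∈ Ico (0:ℝ) sb, D u ≤ ρ/2 := by
        intro u hu
        have hnb : u ∉ bad := notMem_of_lt_csInf hu.2 hbdd
        by_contra hcon
        push_neg at hcon
        exact hnb ⟨⟨hu.1, le_trans hu.2.le hsbmem.1.2⟩, hcon.le⟩
      have hb := gron sb hsbmem.1 hsmall sb ⟨hsbpos.le, le_rfl⟩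
      have hlt : d * Real.exp (L * sb) < ρ/2 := hkey sb (le_trans hsbmem.1.2 hTt)
      have := hsbmem.2
      linarith
  -- the lifetime of z₁ exceeds t
  have hlife : ENNReal.ofReal t < τ z₁ := by
    by_contra hcon
    push_neg at hcon
    have hne : τ z₁ ≠ ⊤ := by
      intro h
      rw [h] at hcon
      exact (ENNReal.ofReal_ne_top (le_antisymm le_top hcon)).elim
    set T' : ℝ := (τ z₁).toReal with hT'def
    have hT'pos : 0 < T' := ENNReal.toReal_pos (hτpos z₁ habs1).ne' hne
    have hT't : T' ≤ t := ENNReal.toReal_le_of_le_ofReal ht hcon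
    have htend := (hmax z₁ habs1 hne).norm
    rw [norm_zero] at htend
    have hev1 : ∀ᶠ s in 𝓝[<] T', ‖g s z₁ - W s‖ < ε := htend.eventually_lt_const hεpos
    have hev2 : Ioo (0:ℝ) T' ∈ 𝓝[<] T' := Ioo_mem_nhdsLT_of_mem ⟨hT'pos, le_rfl⟩
    obtain ⟨s, hs1, hs2⟩ := (hev1.and hev2).exists
    have hsτ : ENNReal.ofReal s < τ z₁ := by
      have : ENNReal.ofReal s < ENNReal.ofReal T' :=
        (ENNReal.ofReal_lt_ofReal_iff hT'pos).2 hs2.2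
      rwa [ENNReal.ofReal_toReal hne] at this
    have hbound := core s hs2.1.le (le_trans hs2.2.le hT't) hsτ s ⟨hs2.1.le, le_rfl⟩
    have hsep : ε ≤ ‖g s z₁ - W s‖ := by
      have h1 : ρ ≤ ‖g s z₀ - W s‖ := hρle s ⟨hs2.1.le, le_trans hs2.2.le hT't⟩
      have h2 : ‖g s z₀ - W s‖ ≤ ‖g s z₁ - W s‖ + ‖g s z₁ - g s z₀‖ := by
        have heq : g s z₀ - W s = (g s z₁ - W s) - (g s z₁ - g s z₀) := by ring
        rw [heq]; exact norm_sub_le _ _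
      have h3 : ‖g s z₁ - g s z₀‖ < ρ/2 :=
        lt_of_le_of_lt hbound (hkey s (le_trans hs2.2.le hT't))
      rw [hεdef]
      linarith
    linarith
  refine ⟨habs1, hlife, fun s hs => ⟨core t ht le_rfl hlife s hs, ?_⟩⟩
  have h1 : ρ ≤ ‖g s z₀ - W s‖ := hρle s hs
  have h2 : ‖g s z₀ - W s‖ ≤ ‖g s z₁ - W s‖ + ‖g s z₁ - g s z₀‖ := by
    have heq : g s z₀ - W s = (g s z₁ - W s) - (g s z₁ - g s z₀) := by ring
    rw [heq]; exact norm_sub_le _ _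
  have h3 : ‖g s z₁ - g s z₀‖ < ρ/2 :=
    lt_of_le_of_lt (core t ht le_rfl hlife s hs) (hkey s hs.2)
  rw [hεdef]
  linarith

lemma primitive_facts {E : Type*} [NormedAddCommGroup E] [NormedSpace ℝ E] [CompleteSpace E]
    {φ : ℝ → E} {t : ℝ} (ht : 0 ≤ t) (hφ : ContinuousOn φ (Icc 0 t)) :
    ContinuousOn (fun s => ∫ u in (0:ℝ)..s, φ u) (Icc 0 t) ∧
    ∀ s ∈ Ico (0:ℝ) t, HasDerivWithinAt (fun x => ∫ u in (0:ℝ)..x, φ u) (φ s) (Ici s) s := by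
  have hint : ∀ s ∈ Icc (0:ℝ) t, IntervalIntegrable φ MeasureTheory.volume 0 s := by
    intro s hs
    apply ContinuousOn.intervalIntegrable
    apply hφ.mono
    rw [uIcc_of_le hs.1]
    exact Icc_subset_Icc le_rfl hs.2
  constructor
  · have := intervalIntegral.continuousOn_primitive_interval'
      (μ := MeasureTheory.volume) (b₁ := (0:ℝ)) (b₂ := t) (a := 0)
      (hint t ⟨ht, le_rfl⟩) (by rw [uIcc_of_le ht]; exact ⟨le_rfl, ht⟩)
    rwa [uIcc_of_le ht] at this
  · intro s hs
    have hIoo : Ioo s t ∈ 𝓝[>] s := Ioo_mem_nhdsGT_of_mem ⟨le_rfl, hs.2⟩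
    have hmeas : StronglyMeasurableAtFilter φ (𝓝[>] s) MeasureTheory.volume := by
      refine ⟨Ioo s t, hIoo, ?_⟩
      exact (hφ.mono (fun u hu => ⟨le_trans hs.1 hu.1.le, hu.2.le⟩)).aestronglyMeasurable
        measurableSet_Ioo
    have hcw : ContinuousWithinAt φ (Ioi s) s := by
      have h1 : ContinuousWithinAt φ (Icc 0 t) s := hφ s ⟨hs.1, hs.2.le⟩
      apply h1.mono_of_mem_nhdsWithin
      rw [mem_nhdsWithin]
      exact ⟨Iio t, isOpen_Iio, hs.2, fun u hu => ⟨le_trans hs.1 hu.2.le, hu.1.le⟩⟩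
    exact intervalIntegral.integral_hasDerivWithinAt_right (hint s ⟨hs.1, hs.2.le⟩) hmeas hcw


lemma loewner_mapsTo
    (hW : ContinuousOn W (Set.Ici (0 : ℝ)))
    (hW1 : ∀ t : ℝ, 0 ≤ t → ‖W t‖ = 1)
    (hg0 : ∀ z : ℂ, ‖z‖ < 1 → g 0 z = z)
    (hode : ∀ z : ℂ, ‖z‖ < 1 → ∀ t : ℝ, 0 ≤ t → ENNReal.ofReal t < τ z →
      g t z ≠ W t ∧
        HasDerivWithinAt (fun s => g s z)
          (-g t z * (g t z + W t) / (g t z - W t)) (Set.Ici (0 : ℝ)) t)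
    {z : ℂ} {t : ℝ} (ht : 0 ≤ t) (hz : ‖z‖ < 1)
    (hτ : ENNReal.ofReal t < τ z) :
    ‖g t z‖ < 1 := by
  obtain ⟨hne, hder, hcont, hder'⟩ := traj_facts hode hz ht hτ
  -- the coefficient function
  set c : ℝ → ℝ := fun s => 2 * Complex.normSq (g s z) / Complex.normSq (g s z - W s)
    with hcdef
  have hWc : ContinuousOn W (Icc 0 t) := hW.mono (fun u hu => hu.1)
  have hnsne : ∀ s ∈ Icc (0:ℝ) t, Complex.normSq (g s z - W s) ≠ 0 := by
    intro s hs
    simp only [ne_eq, Complex.normSq_eq_zero, sub_eq_zero]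
    exact hne s hs
  have hcc : ContinuousOn c (Icc 0 t) := by
    apply ContinuousOn.div
    · exact (continuousOn_const.mul (Complex.continuous_normSq.comp_continuousOn hcont))
    · exact Complex.continuous_normSq.comp_continuousOn (hcont.sub hWc)
    · exact hnsne
  obtain ⟨hBc, hBd⟩ := primitive_facts ht hcc
  set B : ℝ → ℝ := fun s => ∫ u in (0:ℝ)..s, c u with hBdef
  set p : ℝ → ℝ := fun s => (1 - Complex.normSq (g s z)) * Real.exp (B s) with hpdef
  have hpc : ContinuousOn p (Icc 0 t) :=
    ((continuousOn_const.sub (Complex.continuous_normSq.comp_continuousOn hcont)).mul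
      (Real.continuous_exp.comp_continuousOn hBc))
  have hpd : ∀ s ∈ Ico (0:ℝ) t, HasDerivWithinAt p 0 (Ici s) s := by
    intro s hs
    have hsIcc : s ∈ Icc (0:ℝ) t := ⟨hs.1, hs.2.le⟩
    set d : ℂ := rlF (W s) (g s z) with hddef
    have hγd : HasDerivWithinAt (fun u => g u z) d (Ici s) s := hder' s hs
    have hre : HasDerivWithinAt (fun u => (g u z).re) d.re (Ici s) s :=
      Complex.reCLM.hasFDerivAt.comp_hasDerivWithinAt s hγd
    have him : HasDerivWithinAt (fun u => (g u z).im) d.im (Ici s) s :=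
      Complex.imCLM.hasFDerivAt.comp_hasDerivWithinAt s hγd
    have hns : HasDerivWithinAt (fun u => Complex.normSq (g u z))
        (d.re * (g s z).re + (g s z).re * d.re + (d.im * (g s z).im + (g s z).im * d.im))
        (Ici s) s := by
      have h1 := (hre.mul hre).add (him.mul him)
      have heq : (fun u => Complex.normSq (g u z))
          = fun u => (g u z).re * (g u z).re + (g u z).im * (g u z).im := by
        funext u; rw [Complex.normSq_apply]
      rw [heq]
      exact h1
    have hu : HasDerivWithinAt (fun u => 1 - Complex.normSq (g u z))
        (-(c s * (1 - Complex.normSq (g s z)))) (Ici s) s := by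
      have h2 := (hasDerivWithinAt_const s (Ici s) (1:ℝ)).sub hns
      refine h2.congr_deriv (Eq.symm ?_)
      have hω : Complex.normSq (W s) = 1 := by
        have := hW1 s hs.1
        rw [← Complex.sq_norm, this]; norm_num
      have hid := rlF_re (W s) (g s z) (hne s hsIcc) hω
      have hmulre : ((starRingEnd ℂ) (g s z) * d).re
          = (g s z).re * d.re + (g s z).im * d.im := by
        rw [Complex.mul_re, Complex.conj_re, Complex.conj_im]
        ring
      rw [← hddef] at hid
      rw [hmulre] at hid
      have hns0 := hnsne s hsIcc
      have hid2 : ((g s z).re * d.re + (g s z).im * d.im) * Complex.normSq (g s z - W s)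
          = Complex.normSq (g s z) * (1 - Complex.normSq (g s z)) := by
        rw [hid]; field_simp
      rw [hcdef]
      field_simp
      linear_combination (2:ℝ) * hid2
    have hB' : HasDerivWithinAt (fun u => Real.exp (B u)) (Real.exp (B s) * c s) (Ici s) s :=
      (hBd s hs).exp
    have := hu.mul hB'
    refine this.congr_deriv (Eq.symm ?_)
    ring
  have hconst := constant_of_has_deriv_right_zero hpc hpd
  have hpt := hconst t ⟨ht, le_rfl⟩
  have hB0 : B 0 = 0 := by rw [hBdef]; simp
  have hp0 : p 0 = 1 - Complex.normSq z := by
    rw [hpdef]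
    simp only [hg0 z hz, hB0, Real.exp_zero, mul_one]
  rw [hp0] at hpt
  have hzlt : Complex.normSq z < 1 := by
    rw [← Complex.sq_norm]
    nlinarith [norm_nonneg z]
  have hexp : 0 < Real.exp (B t) := Real.exp_pos _
  have hlt : Complex.normSq (g t z) < 1 := by
    have hppos : 0 < p t := by rw [hpt]; linarith
    rw [hpdef] at hppos
    simp only at hppos
    nlinarith
  rw [← Complex.sq_norm] at hlt
  nlinarith [norm_nonneg (g t z)]

lemma loewner_injOn
    (hW : ContinuousOn W (Set.Ici (0 : ℝ)))
    (hW1 : ∀ t : ℝ, 0 ≤ t → ‖W t‖ = 1)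
    (hg0 : ∀ z : ℂ, ‖z‖ < 1 → g 0 z = z)
    (hode : ∀ z : ℂ, ‖z‖ < 1 → ∀ t : ℝ, 0 ≤ t → ENNReal.ofReal t < τ z →
      g t z ≠ W t ∧
        HasDerivWithinAt (fun s => g s z)
          (-g t z * (g t z + W t) / (g t z - W t)) (Set.Ici (0 : ℝ)) t)
    {t : ℝ} (ht : 0 ≤ t) {z₁ z₂ : ℂ}
    (h1 : ‖z₁‖ < 1) (hτ1 : ENNReal.ofReal t < τ z₁)
    (h2 : ‖z₂‖ < 1) (hτ2 : ENNReal.ofReal t < τ z₂)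
    (heq : g t z₁ = g t z₂) : z₁ = z₂ := by
  rcases eq_or_lt_of_le ht with h0 | htpos
  · subst h0
    rwa [hg0 z₁ h1, hg0 z₂ h2] at heq
  obtain ⟨hne₁, hder₁, hcont₁, _⟩ := traj_facts hode h1 ht hτ1
  obtain ⟨hne₂, hder₂, hcont₂, _⟩ := traj_facts hode h2 ht hτ2
  have hIcc_ne : (Icc (0:ℝ) t).Nonempty := nonempty_Icc.2 ht
  have hWc : ContinuousOn W (Icc 0 t) := hW.mono (fun u hu => hu.1)
  obtain ⟨s₁, hs₁, hmin₁⟩ := isCompact_Icc.exists_isMinOn hIcc_ne (hcont₁.sub hWc).norm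
  obtain ⟨s₂, hs₂, hmin₂⟩ := isCompact_Icc.exists_isMinOn hIcc_ne (hcont₂.sub hWc).norm
  obtain ⟨u₁, hu₁, hmax₁⟩ := isCompact_Icc.exists_isMaxOn hIcc_ne hcont₁.norm
  obtain ⟨u₂, hu₂, hmax₂⟩ := isCompact_Icc.exists_isMaxOn hIcc_ne hcont₂.norm
  set ε : ℝ := min ‖g s₁ z₁ - W s₁‖ ‖g s₂ z₂ - W s₂‖ with hεdef
  have hεpos : 0 < ε := by
    apply lt_min
    · rw [norm_pos_iff, sub_ne_zero]; exact hne₁ s₁ hs₁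
    · rw [norm_pos_iff, sub_ne_zero]; exact hne₂ s₂ hs₂
  set R : ℝ := max ‖g u₁ z₁‖ ‖g u₂ z₂‖ with hRdef
  set L : ℝ := 1 + 2 / ε ^ 2 with hLdef
  have hLpos : 0 < L := by positivity
  set K : ℝ≥0 := L.toNNReal with hKdef
  have hKL : (K : ℝ) = L := Real.coe_toNNReal L hLpos.le
  set good : ℝ → Set ℂ := fun u =>
    if u ∈ Icc (0:ℝ) t then {w | ε ≤ ‖w - W u‖ ∧ ‖w‖ ≤ R} else ∅ with hgooddef
  have hlip : ∀ u, LipschitzOnWith K (fun w => rlF (W u) w) (good u) := by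
    intro u
    by_cases hu : u ∈ Icc (0:ℝ) t
    · rw [lipschitzOnWith_iff_dist_le_mul]
      intro x hx y hy
      rw [hgooddef] at hx hy
      simp only [if_pos hu, mem_setOf_eq] at hx hy
      rw [dist_eq_norm, dist_eq_norm, hKL]
      have hWu : ‖W u‖ = 1 := by exact hW1 u hu.1
      exact rlF_lip hWu hεpos hx.1 hy.1
    · rw [hgooddef]; simp only [if_neg hu]; exact lipschitzOnWith_empty _ _
  have hfs₁ : ∀ u ∈ Ioc (0:ℝ) t, g u z₁ ∈ good u := by
    intro u hu
    have huI : u ∈ Icc (0:ℝ) t := ⟨hu.1.le, hu.2⟩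
    rw [hgooddef]
    simp only [if_pos huI, mem_setOf_eq]
    exact ⟨le_trans (min_le_left _ _) (hmin₁ huI), le_trans (hmax₁ huI) (le_max_left _ _)⟩
  have hfs₂ : ∀ u ∈ Ioc (0:ℝ) t, g u z₂ ∈ good u := by
    intro u hu
    have huI : u ∈ Icc (0:ℝ) t := ⟨hu.1.le, hu.2⟩
    rw [hgooddef]
    simp only [if_pos huI, mem_setOf_eq]
    exact ⟨le_trans (min_le_right _ _) (hmin₂ huI), le_trans (hmax₂ huI) (le_max_right _ _)⟩
  have hder₁' : ∀ u ∈ Ioc (0:ℝ) t,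
      HasDerivWithinAt (fun s => g s z₁) (rlF (W u) (g u z₁)) (Iic u) u := by
    intro u hu
    exact ((hder₁ u ⟨hu.1.le, hu.2⟩).hasDerivAt (Ici_mem_nhds hu.1)).hasDerivWithinAt
  have hder₂' : ∀ u ∈ Ioc (0:ℝ) t,
      HasDerivWithinAt (fun s => g s z₂) (rlF (W u) (g u z₂)) (Iic u) u := by
    intro u hu
    exact ((hder₂ u ⟨hu.1.le, hu.2⟩).hasDerivAt (Ici_mem_nhds hu.1)).hasDerivWithinAt
  have hEq := ODE_solution_unique_of_mem_Icc_left (v := fun u w => rlF (W u) w)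
    (s := good) (K := K) (fun u _ => hlip u) hcont₁ hder₁' hfs₁ hcont₂ hder₂' hfs₂ heq
  have h0 := hEq ⟨le_rfl, ht⟩
  simp only at h0
  rwa [hg0 z₁ h1, hg0 z₂ h2] at h0

set_option maxHeartbeats 1000000 in
lemma loewner_hasDerivAt
    (hW : ContinuousOn W (Set.Ici (0 : ℝ)))
    (hW1 : ∀ t : ℝ, 0 ≤ t → ‖W t‖ = 1)
    (hτpos : ∀ z : ℂ, ‖z‖ < 1 → 0 < τ z)
    (hg0 : ∀ z : ℂ, ‖z‖ < 1 → g 0 z = z)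
    (hode : ∀ z : ℂ, ‖z‖ < 1 → ∀ t : ℝ, 0 ≤ t → ENNReal.ofReal t < τ z →
      g t z ≠ W t ∧
        HasDerivWithinAt (fun s => g s z)
          (-g t z * (g t z + W t) / (g t z - W t)) (Set.Ici (0 : ℝ)) t)
    (hmax : ∀ z : ℂ, ‖z‖ < 1 → τ z ≠ ⊤ →
      Tendsto (fun t : ℝ => g t z - W t) (𝓝[<] (τ z).toReal) (𝓝 0))
    {z₀ : ℂ} {t : ℝ} (ht : 0 ≤ t) (hz₀ : ‖z₀‖ < 1)
    (hτ : ENNReal.ofReal t < τ z₀) :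
    ∃ dv : ℂ, HasDerivAt (fun z => g t z) dv z₀ := by
  obtain ⟨r, hr, L, hL, ε, hε, hsep₀, htube⟩ := tube hW hW1 hτpos hg0 hode hmax ht hz₀ hτ
  obtain ⟨hne₀, hder₀, hcont₀, hder₀'⟩ := traj_facts hode hz₀ ht hτ
  have hWc : ContinuousOn W (Icc 0 t) := hW.mono (fun u hu => hu.1)
  -- the coefficient of the variational equation
  set a : ℝ → ℂ := fun s => -1 + 2*(W s)^2/(g s z₀ - W s)^2 with hadef
  have hdne : ∀ s ∈ Icc (0:ℝ) t, (g s z₀ - W s)^2 ≠ 0 := by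
    intro s hs
    exact pow_ne_zero 2 (sub_ne_zero.mpr (hne₀ s hs))
  have hac : ContinuousOn a (Icc 0 t) := by
    apply continuousOn_const.add
    apply ContinuousOn.div
    · exact continuousOn_const.mul ((hWc.pow 2))
    · exact (hcont₀.sub hWc).pow 2
    · exact hdne
  obtain ⟨hAc, hAd⟩ := primitive_facts ht hac
  set A : ℝ → ℂ := fun s => ∫ u in (0:ℝ)..s, a u with hAdef
  set v : ℝ → ℂ := fun s => Complex.exp (A s) with hvdef
  have hvc : ContinuousOn v (Icc 0 t) := Complex.continuous_exp.comp_continuousOn hAc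
  -- bound on a
  set Ka : ℝ := 1 + 2 / ε ^ 2 with hKadef
  have hKapos : 0 < Ka := by positivity
  have haB : ∀ s ∈ Icc (0:ℝ) t, ‖a s‖ ≤ Ka := by
    intro s hs
    have hWs : ‖W s‖ = 1 := by exact hW1 s hs.1
    have hγW : ε ≤ ‖g s z₀ - W s‖ := hsep₀ s hs
    calc ‖a s‖ ≤ ‖(-1 : ℂ)‖ + ‖2*(W s)^2/(g s z₀ - W s)^2‖ := norm_add_le _ _
      _ = 1 + 2 / ‖g s z₀ - W s‖^2 := by
          rw [norm_div, norm_mul, norm_pow, norm_pow, hWs, norm_neg, norm_one]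
          norm_num
      _ ≤ Ka := by
          rw [hKadef]
          have h1 : ε^2 ≤ ‖g s z₀ - W s‖^2 := by nlinarith
          have h2 : 2 / ‖g s z₀ - W s‖^2 ≤ 2 / ε^2 :=
            div_le_div_of_nonneg_left (by norm_num) (by positivity) h1
          linarith
  set EL : ℝ := Real.exp (L * t) with hELdef
  have hEL1 : 1 ≤ EL := by
    rw [hELdef, ← Real.exp_zero]
    exact Real.exp_le_exp.2 (by nlinarith)
  set C : ℝ := 2/ε^3 * EL^2 with hCdef
  have hC0 : 0 ≤ C := by positivity
  -- the Grönwall constant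
  set C' : ℝ := C / Ka * (Real.exp (Ka * t) - 1) with hC'def
  have hC'0 : 0 ≤ C' := by
    have : 1 ≤ Real.exp (Ka * t) := by
      rw [← Real.exp_zero]; exact Real.exp_le_exp.2 (by nlinarith)
    have h2 : 0 ≤ C / Ka := by positivity
    nlinarith
  -- main quantitative estimate
  have key : ∀ h : ℂ, ‖h‖ < r →
      ‖g t (z₀ + h) - g t z₀ - h * v t‖ ≤ C' * ‖h‖^2 := by
    intro h hhr
    set z₁ : ℂ := z₀ + h with hz₁def
    have hz₁s : ‖z₁ - z₀‖ < r := by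
      rw [hz₁def]; simpa using hhr
    obtain ⟨habs1, hlife, hclose⟩ := htube z₁ hz₁s
    obtain ⟨hne₁, hder₁, hcont₁, hder₁'⟩ := traj_facts hode habs1 ht hlife
    have hnorm_eq : ‖z₁ - z₀‖ = ‖h‖ := by rw [hz₁def]; simp
    have hcl : ∀ s ∈ Icc (0:ℝ) t, ‖g s z₁ - g s z₀‖ ≤ ‖h‖ * EL := by
      intro s hs
      have h1 := (hclose s hs).1
      rw [hnorm_eq] at h1
      have h2 : Real.exp (L * s) ≤ EL := by
        rw [hELdef]
        exact Real.exp_le_exp.2 (mul_le_mul_of_nonneg_left hs.2 hL)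
      calc ‖g s z₁ - g s z₀‖ ≤ ‖h‖ * Real.exp (L * s) := h1
        _ ≤ ‖h‖ * EL := mul_le_mul_of_nonneg_left h2 (norm_nonneg _)
    set q : ℝ → ℂ := fun s => g s z₁ - g s z₀ - h * v s with hqdef
    have hqc : ContinuousOn q (Icc 0 t) :=
      (hcont₁.sub hcont₀).sub (continuousOn_const.mul hvc)
    set q' : ℝ → ℂ := fun s =>
      rlF (W s) (g s z₁) - rlF (W s) (g s z₀) - h * (Complex.exp (A s) * a s) with hq'def
    have hqd : ∀ s ∈ Ico (0:ℝ) t, HasDerivWithinAt q (q' s) (Ici s) s := by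
      intro s hs
      exact ((hder₁' s hs).sub (hder₀' s hs)).sub (((hAd s hs).cexp).const_mul h)
    have hq0 : ‖q 0‖ ≤ 0 := by
      rw [hqdef]
      simp only [hg0 z₁ habs1, hg0 z₀ hz₀]
      have hA0 : A 0 = 0 := by rw [hAdef]; simp
      rw [hvdef]
      simp only [hA0, Complex.exp_zero, mul_one, hz₁def]
      simp
    have hbound : ∀ s ∈ Ico (0:ℝ) t, ‖q' s‖ ≤ Ka * ‖q s‖ + C * ‖h‖^2 := by
      intro s hs
      have hsI : s ∈ Icc (0:ℝ) t := ⟨hs.1, hs.2.le⟩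
      have hWs : ‖W s‖ = 1 := by exact hW1 s hs.1
      have hrem := rlF_taylor_bound (ω := W s) (w := g s z₁) (γ := g s z₀)
        (ε := ε) (R := ‖h‖ * EL) hWs hε ((hclose s hsI).2) (hsep₀ s hsI) (hcl s hsI)
      have hsplit : q' s = a s * q s
          + (rlF (W s) (g s z₁) - rlF (W s) (g s z₀) - a s * (g s z₁ - g s z₀)) := by
        rw [hq'def, hqdef, hvdef]
        ring
      rw [hsplit]
      have hterm2 : ‖rlF (W s) (g s z₁) - rlF (W s) (g s z₀) - a s * (g s z₁ - g s z₀)‖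
          ≤ C * ‖h‖^2 := by
        have h2 : 2/ε^3 * (‖h‖ * EL * ‖g s z₁ - g s z₀‖) ≤ 2/ε^3 * (‖h‖ * EL * (‖h‖ * EL)) := by
          apply mul_le_mul_of_nonneg_left
          · exact mul_le_mul_of_nonneg_left (hcl s hsI) (by positivity)
          · positivity
        calc ‖rlF (W s) (g s z₁) - rlF (W s) (g s z₀) - a s * (g s z₁ - g s z₀)‖
            ≤ 2/ε^3 * (‖h‖ * EL * ‖g s z₁ - g s z₀‖) := hrem
          _ ≤ 2/ε^3 * (‖h‖ * EL * (‖h‖ * EL)) := h2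
          _ = C * ‖h‖^2 := by rw [hCdef]; ring
      calc ‖a s * q s + (rlF (W s) (g s z₁) - rlF (W s) (g s z₀) - a s * (g s z₁ - g s z₀))‖
          ≤ ‖a s * q s‖ + ‖rlF (W s) (g s z₁) - rlF (W s) (g s z₀) - a s * (g s z₁ - g s z₀)‖ :=
            norm_add_le _ _
        _ ≤ Ka * ‖q s‖ + C * ‖h‖^2 := by
            have := mul_le_mul_of_nonneg_right (haB s hsI) (norm_nonneg (q s))
            rw [norm_mul]
            linarith
    have hgron := norm_le_gronwallBound_of_norm_deriv_right_le hqc hqd hq0 hbound t ⟨ht, le_rfl⟩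
    have hgb : gronwallBound 0 Ka (C * ‖h‖^2) (t - 0) = C' * ‖h‖^2 := by
      rw [gronwallBound_of_K_ne_0 hKapos.ne']
      rw [hC'def]
      simp only [zero_mul, zero_add, sub_zero]
      ring
    rw [hgb] at hgron
    exact hgron
  -- conclude: `g t` has complex derivative `v t` at `z₀`
  refine ⟨v t, ?_⟩
  rw [hasDerivAt_iff_isLittleO]
  rw [Asymptotics.isLittleO_iff]
  intro c hc
  have hδpos : 0 < min r (c / (C' + 1)) := by
    apply lt_min hr
    positivity
  filter_upwards [Metric.ball_mem_nhds z₀ hδpos] with z hz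
  rw [Metric.mem_ball, dist_eq_norm] at hz
  have hz1 : ‖z - z₀‖ < r := lt_of_lt_of_le hz (min_le_left _ _)
  have hz2 : ‖z - z₀‖ < c / (C' + 1) := lt_of_lt_of_le hz (min_le_right _ _)
  have hk := key (z - z₀) hz1
  have hzz : z₀ + (z - z₀) = z := by ring
  rw [hzz] at hk
  have : ‖g t z - g t z₀ - (z - z₀) * v t‖ ≤ C' * ‖z - z₀‖^2 := hk
  calc ‖g t z - g t z₀ - (z - z₀) • v t‖ = ‖g t z - g t z₀ - (z - z₀) * v t‖ := by
        rw [smul_eq_mul]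
    _ ≤ C' * ‖z - z₀‖^2 := this
    _ ≤ c * ‖z - z₀‖ := by
        have h1 : C' * ‖z - z₀‖ ≤ c := by
          have h2 : C' * ‖z - z₀‖ ≤ C' * (c / (C' + 1)) :=
            mul_le_mul_of_nonneg_left hz2.le hC'0
          have h3 : C' * (c / (C' + 1)) ≤ c := by
            rw [div_eq_mul_inv]
            have h4 : C' * (c * (C' + 1)⁻¹) = c * (C' / (C' + 1)) := by ring
            have h5 : C' / (C' + 1) ≤ 1 := by
              rw [div_le_one (by linarith)]
              linarith
            rw [h4]
            nlinarith
          linarith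
        nlinarith [norm_nonneg (z - z₀)]

end Traj

/-- For the radial Loewner flow `g t z` in the unit disk with continuous driving
term `W` on the unit circle (maximal solutions with lifetimes `τ z`), for each
`t ≥ 0` the set `H_t = {z ∈ 𝔻 : τ_z > t}` is open, and `z ↦ g t z` is holomorphic
and injective on `H_t`, mapping `H_t` into the unit disk. -/
theorem radial_loewner_flow_holomorphic_injective
    (W : ℝ → ℂ) (hW : ContinuousOn W (Set.Ici (0 : ℝ)))
    (hW1 : ∀ t : ℝ, 0 ≤ t → ‖W t‖ = 1)
    (g : ℝ → ℂ → ℂ) (τ : ℂ → ℝ≥0∞)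
    (hτpos : ∀ z : ℂ, ‖z‖ < 1 → 0 < τ z)
    (hg0 : ∀ z : ℂ, ‖z‖ < 1 → g 0 z = z)
    (hode : ∀ z : ℂ, ‖z‖ < 1 → ∀ t : ℝ, 0 ≤ t → ENNReal.ofReal t < τ z →
      g t z ≠ W t ∧
        HasDerivWithinAt (fun s => g s z)
          (-g t z * (g t z + W t) / (g t z - W t)) (Set.Ici (0 : ℝ)) t)
    (hmax : ∀ z : ℂ, ‖z‖ < 1 → τ z ≠ ⊤ →
      Tendsto (fun t : ℝ => g t z - W t) (𝓝[<] (τ z).toReal) (𝓝 0)) :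
    ∀ t : ℝ, 0 ≤ t →
      IsOpen {z : ℂ | ‖z‖ < 1 ∧ ENNReal.ofReal t < τ z} ∧
      DifferentiableOn ℂ (g t) {z : ℂ | ‖z‖ < 1 ∧ ENNReal.ofReal t < τ z} ∧
      Set.InjOn (g t) {z : ℂ | ‖z‖ < 1 ∧ ENNReal.ofReal t < τ z} ∧
      Set.MapsTo (g t) {z : ℂ | ‖z‖ < 1 ∧ ENNReal.ofReal t < τ z}
        {z : ℂ | ‖z‖ < 1} := by
  intro t ht
  refine ⟨?_, ?_, ?_, ?_⟩
  · rw [Metric.isOpen_iff]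
    rintro z₀ ⟨hz₀, hτ₀⟩
    obtain ⟨r, hr, L, hL, ε, hε, hsep₀, htube⟩ := tube hW hW1 hτpos hg0 hode hmax ht hz₀ hτ₀
    refine ⟨r, hr, ?_⟩
    intro z₁ hz₁
    rw [Metric.mem_ball, dist_eq_norm] at hz₁
    obtain ⟨habs1, hlife, _⟩ := htube z₁ hz₁
    exact ⟨habs1, hlife⟩
  · rintro z₀ ⟨hz₀, hτ₀⟩
    obtain ⟨dv, hdv⟩ := loewner_hasDerivAt hW hW1 hτpos hg0 hode hmax ht hz₀ hτ₀
    exact hdv.differentiableAt.differentiableWithinAt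
  · rintro z₁ ⟨h1, hτ1⟩ z₂ ⟨h2, hτ2⟩ heq
    exact loewner_injOn hW hW1 hg0 hode ht h1 hτ1 h2 hτ2 heq
  · rintro z ⟨hz, hτz⟩
    exact loewner_mapsTo hW hW1 hg0 hode ht hz hτz
end
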